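/- arXiv:1502.05763 — 3 statements merged into one kernel-verified Lean document; each statement's English description precedes it below -/
import Mathlib

section
/- Let Ω be a Hausdorff space with Borel σ-algebra 𝓕, μ a regular finite measure on 𝓕, and f : Ω → ℝ a bounded Borel measurable function. Then there exists a sequence (fⁿ) of bounded upper semicontinuous functions with fⁿ ≤ f and ⟨fⁿ, μ⟩ ↑ ⟨f, μ⟩. Consequently, for every increasing functional φ : B_b → ℝ ∪ {+∞} on the space B_b of bounded Borel measurable functions, one has φ*_{U_b}(μ) = φ*_{B_b}(μ), where U_b is the space of bounded upper semicontinuous functions. -/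
open MeasureTheory Filter Topology Set

variable {Ω : Type*} [TopologicalSpace Ω] [MeasurableSpace Ω] [BorelSpace Ω]

/-- Bounded Borel measurable real-valued functions. -/
def Bb (Ω : Type*) [TopologicalSpace Ω] [MeasurableSpace Ω] : Set (Ω → ℝ) :=
  {f | Measurable f ∧ ∃ M : ℝ, ∀ ω, |f ω| ≤ M}

/-- Bounded upper semicontinuous real-valued functions. -/
def Ub (Ω : Type*) [TopologicalSpace Ω] : Set (Ω → ℝ) :=
  {f | UpperSemicontinuous f ∧ ∃ M : ℝ, ∀ ω, |f ω| ≤ M}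

/-- Regularity: inner regularity by closed compact sets on all Borel sets. -/
def PaperRegular {α : Type*} [TopologicalSpace α] [MeasurableSpace α] (μ : Measure α) :
    Prop :=
  ∀ A : Set α, MeasurableSet A →
    μ A = ⨆ B ∈ {B : Set α | MeasurableSet B ∧ IsClosed B ∧ IsCompact B ∧ B ⊆ A}, μ B

/-- The convex conjugate of φ restricted to a class S of functions. -/
noncomputable def conjOn (S : Set (Ω → ℝ)) (φ : (Ω → ℝ) → EReal) (μ : Measure Ω) : EReal :=
  ⨆ f ∈ S, ((∫ ω, f ω ∂μ : ℝ) : EReal) - φ f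

open scoped NNReal

set_option linter.unusedSectionVars false

lemma usc_max' {f g : Ω → ℝ} (hf : UpperSemicontinuous f) (hg : UpperSemicontinuous g) :
    UpperSemicontinuous (fun ω => max (f ω) (g ω)) := fun x y hy => by
  filter_upwards [hf x y ((le_max_left _ _).trans_lt hy),
    hg x y ((le_max_right _ _).trans_lt hy)] with z h1 h2 using max_lt h1 h2

lemma paperRegular_weaklyRegular (μ : Measure Ω) [IsFiniteMeasure μ] (hreg : PaperRegular μ) :
    μ.WeaklyRegular := by
  apply Measure.InnerRegularWRT.weaklyRegular_of_finite
  intro U hU r hr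
  rw [hreg U hU.measurableSet] at hr
  simp only [lt_iSup_iff, mem_setOf_eq] at hr
  obtain ⟨B, ⟨-, hBc, -, hBU⟩, hrB⟩ := hr
  exact ⟨B, hBU, hBc, hrB⟩

lemma bb_integrable (μ : Measure Ω) [IsFiniteMeasure μ] {f : Ω → ℝ} (hf : f ∈ Bb Ω) :
    Integrable f μ := by
  obtain ⟨hm, M, hM⟩ := hf
  exact ⟨hm.aestronglyMeasurable,
    HasFiniteIntegral.of_bounded (C := M) (ae_of_all _ fun ω => by
      simpa [Real.norm_eq_abs] using hM ω)⟩

lemma key_seq (μ : Measure Ω) [IsFiniteMeasure μ] [μ.WeaklyRegular] (f : Ω → ℝ)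
    (hf : f ∈ Bb Ω) :
    ∃ fn : ℕ → Ω → ℝ, (∀ n, fn n ∈ Ub Ω) ∧ (∀ n ω, fn n ω ≤ f ω) ∧
      Monotone (fun n => ∫ ω, fn n ω ∂μ) ∧
      Tendsto (fun n => ∫ ω, fn n ω ∂μ) atTop (𝓝 (∫ ω, f ω ∂μ)) := by
  obtain ⟨hm, M0, hM0⟩ := hf
  set M : ℝ := |M0| with hMdef
  have hM : ∀ ω, |f ω| ≤ M := fun ω => (hM0 ω).trans (le_abs_self M0)
  have hfle : ∀ ω, -M ≤ f ω ∧ f ω ≤ M := fun ω => abs_le.1 (hM ω)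
  set F : Ω → ℝ≥0 := fun ω => (f ω + M).toNNReal with hFdef
  have hFcoe : ∀ ω, (F ω : ℝ) = f ω + M := fun ω =>
    Real.coe_toNNReal _ (by linarith [(hfle ω).1])
  have hfint : Integrable f μ := bb_integrable μ ⟨hm, M0, hM0⟩
  have Fint : Integrable (fun ω => (F ω : ℝ)) μ :=
    (hfint.add (integrable_const M)).congr (ae_of_all _ fun ω => (hFcoe ω).symm)
  choose g hgF husc gint hIg using fun n : ℕ =>
    exists_upperSemicontinuous_le_integral_le (μ := μ) F Fint
      (show (0:ℝ) < 1 / (n + 1) by positivity)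
  set h : ℕ → Ω → ℝ := fun n ω => (g n ω : ℝ) - M with hhdef
  have hcoe_mono : Monotone (fun x : ℝ≥0 => (x : ℝ)) := fun a b => NNReal.coe_le_coe.2
  have husc' : ∀ n, UpperSemicontinuous (h n) := fun n => by
    have : Continuous (fun x : ℝ≥0 => (x : ℝ) - M) := by continuity
    exact this.comp_upperSemicontinuous (husc n)
      (fun a b hab => by simpa using NNReal.coe_le_coe.2 hab)
  have hhle : ∀ n ω, h n ω ≤ f ω := fun n ω => by
    have := NNReal.coe_le_coe.2 (hgF n ω)
    rw [hFcoe ω] at this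
    simp only [hhdef]; linarith
  have hhge : ∀ n ω, -M ≤ h n ω := fun n ω => by
    have : (0:ℝ) ≤ (g n ω : ℝ) := (g n ω).coe_nonneg
    simp only [hhdef]; linarith
  have hhbd : ∀ n ω, |h n ω| ≤ M := fun n ω =>
    abs_le.2 ⟨hhge n ω, (hhle n ω).trans (hfle ω).2⟩
  have hhmeas : ∀ n, Measurable (h n) := fun n => (husc' n).measurable
  have hhint : ∀ n, Integrable (h n) μ := fun n =>
    bb_integrable μ ⟨hhmeas n, M, hhbd n⟩
  -- integral lower bound for h n
  have hIh : ∀ n, ∫ ω, f ω ∂μ - 1 / (n + 1) ≤ ∫ ω, h n ω ∂μ := by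
    intro n
    have e1 : ∫ ω, (F ω : ℝ) ∂μ = ∫ ω, f ω ∂μ + ∫ ω, (M:ℝ) ∂μ := by
      rw [← integral_add hfint (integrable_const M)]
      exact integral_congr_ae (ae_of_all _ fun ω => hFcoe ω)
    have e2 : ∫ ω, h n ω ∂μ = ∫ ω, (g n ω : ℝ) ∂μ - ∫ ω, (M:ℝ) ∂μ := by
      rw [← integral_sub (gint n) (integrable_const M)]
    have := hIg n
    rw [e1] at this
    rw [e2]
    linarith
  -- build the monotone sequence
  set fn : ℕ → Ω → ℝ := fun n =>
    Nat.rec (h 0) (fun k fk ω => max (fk ω) (h (k + 1) ω)) n with hfndef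
  have hfn_succ : ∀ n ω, fn (n + 1) ω = max (fn n ω) (h (n + 1) ω) := fun n ω => rfl
  have hfn_usc : ∀ n, UpperSemicontinuous (fn n) := by
    intro n; induction n with
    | zero => exact husc' 0
    | succ k ih => exact usc_max' ih (husc' (k + 1))
  have hfn_le : ∀ n ω, fn n ω ≤ f ω := by
    intro n; induction n with
    | zero => exact hhle 0
    | succ k ih => exact fun ω => max_le (ih ω) (hhle (k + 1) ω)
  have hfn_ge : ∀ n ω, -M ≤ fn n ω := by
    intro n; induction n with
    | zero => exact hhge 0
    | succ k ih => exact fun ω => le_max_of_le_left (ih ω)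
  have hfn_bd : ∀ n ω, |fn n ω| ≤ M := fun n ω =>
    abs_le.2 ⟨hfn_ge n ω, (hfn_le n ω).trans (hfle ω).2⟩
  have hfn_h : ∀ n ω, h n ω ≤ fn n ω := by
    intro n; induction n with
    | zero => exact fun ω => le_rfl
    | succ k ih => exact fun ω => le_max_right _ _
  have hfn_mono : ∀ n ω, fn n ω ≤ fn (n + 1) ω := fun n ω => le_max_left _ _
  have hfn_bb : ∀ n, fn n ∈ Bb Ω := fun n => ⟨(hfn_usc n).measurable, M, hfn_bd n⟩
  have hfn_int : ∀ n, Integrable (fn n) μ := fun n => bb_integrable μ (hfn_bb n)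
  refine ⟨fn, fun n => ⟨hfn_usc n, M, hfn_bd n⟩, hfn_le, ?_, ?_⟩
  · exact monotone_nat_of_le_succ fun n =>
      integral_mono (hfn_int n) (hfn_int (n + 1)) (hfn_mono n)
  · have hub : ∀ n, ∫ ω, fn n ω ∂μ ≤ ∫ ω, f ω ∂μ := fun n =>
      integral_mono (hfn_int n) hfint (hfn_le n)
    have hlb : ∀ n, ∫ ω, f ω ∂μ - 1 / (n + 1) ≤ ∫ ω, fn n ω ∂μ := fun n =>
      (hIh n).trans (integral_mono (hhint n) (hfn_int n) (hfn_h n))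
    have hl : Tendsto (fun n : ℕ => ∫ ω, f ω ∂μ - 1 / (n + 1)) atTop
        (𝓝 (∫ ω, f ω ∂μ)) := by
      have := tendsto_one_div_add_atTop_nhds_zero_nat (𝕜 := ℝ)
      have := (tendsto_const_nhds (x := ∫ ω, f ω ∂μ) (f := atTop)).sub this
      simpa using this
    exact tendsto_of_tendsto_of_tendsto_of_le_of_le hl tendsto_const_nhds hlb hub

/-- Remark 1.9.2: for a regular finite Borel measure μ on a Hausdorff space and any bounded
Borel function f there is a sequence of bounded upper semicontinuous minorants whose
integrals increase to that of f; consequently φ*_{U_b}(μ) = φ*_{B_b}(μ) for every increasing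
functional φ on B_b. -/
theorem stmt17 [T2Space Ω] (μ : Measure Ω) (hfin : IsFiniteMeasure μ)
    (hreg : PaperRegular μ) (f : Ω → ℝ) (hf : f ∈ Bb Ω) :
    (∃ fn : ℕ → Ω → ℝ, (∀ n, fn n ∈ Ub Ω) ∧ (∀ n ω, fn n ω ≤ f ω) ∧
      Monotone (fun n => ∫ ω, fn n ω ∂μ) ∧
      Tendsto (fun n => ∫ ω, fn n ω ∂μ) atTop (𝓝 (∫ ω, f ω ∂μ))) ∧
    (∀ φ : (Ω → ℝ) → EReal,
      (∀ g ∈ Bb Ω, ∀ h ∈ Bb Ω, (∀ ω, h ω ≤ g ω) → φ h ≤ φ g) →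
      conjOn (Ub Ω) φ μ = conjOn (Bb Ω) φ μ) := by
  haveI := hfin
  haveI := paperRegular_weaklyRegular μ hreg
  have hUbBb : ∀ g : Ω → ℝ, g ∈ Ub Ω → g ∈ Bb Ω := fun g hg =>
    ⟨hg.1.measurable, hg.2⟩
  constructor
  · exact key_seq μ f hf
  · intro φ hφ
    refine le_antisymm ?_ ?_
    · exact iSup₂_le fun g hg => le_iSup₂_of_le g (hUbBb g hg) le_rfl
    · refine iSup₂_le fun g hg => ?_
      obtain ⟨fn, hfnUb, hfnle, -, htend⟩ := key_seq μ g hg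
      have hφle : ∀ n, φ (fn n) ≤ φ g := fun n =>
        hφ g hg (fn n) (hUbBb _ (hfnUb n)) (hfnle n)
      have htri : ∀ x : EReal, x = ⊥ ∨ x = ⊤ ∨ ∃ c : ℝ, x = c := by
        intro x
        induction x using EReal.rec with
        | bot => exact Or.inl rfl
        | coe c => exact Or.inr (Or.inr ⟨c, rfl⟩)
        | top => exact Or.inr (Or.inl rfl)
      rcases htri (φ g) with hc | hc | ⟨c, hc⟩
      · -- ⊥ case
        have h0 : φ (fn 0) = ⊥ := le_bot_iff.1 (hc ▸ hφle 0)
        have htop : ((∫ ω, fn 0 ω ∂μ : ℝ) : EReal) - φ (fn 0) = ⊤ := by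
          rw [h0]; exact EReal.coe_sub_bot _
        exact le_trans le_top (le_iSup₂_of_le (fn 0) (hfnUb 0) htop.ge)
      · -- ⊤ case
        rw [hc, EReal.sub_top]; exact bot_le
      · -- real case
        rw [hc]
        have hφle' : ∀ n, φ (fn n) ≤ (c : EReal) := fun n => hc ▸ hφle n
        have hterm : ∀ n, (((∫ ω, fn n ω ∂μ) - c : ℝ) : EReal) ≤ conjOn (Ub Ω) φ μ := by
          intro n
          refine le_trans ?_ (le_iSup₂_of_le (fn n) (hfnUb n) le_rfl)
          rw [EReal.coe_sub]
          exact EReal.sub_le_sub le_rfl (hφle' n)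
        have htend' : Tendsto (fun n => (((∫ ω, fn n ω ∂μ) - c : ℝ) : EReal)) atTop
            (𝓝 (((∫ ω, g ω ∂μ) - c : ℝ) : EReal)) :=
          EReal.tendsto_coe.2 (htend.sub tendsto_const_nhds)
        have := le_of_tendsto' htend' hterm
        rwa [EReal.coe_sub] at this
end

section
/- Let Ω be a Hausdorff space with Borel σ-algebra 𝓕 and let φ : B_b → ℝ be a real-valued increasing convex functional on the space B_b of bounded Borel measurable functions f : Ω → ℝ such that for every constant M ≥ 1 there exists a sequence (K_n) of compact subsets of Ω with φ(M 1_{K_n^c}) → φ(0). Then the restriction of φ to the space C_b of bounded continuous functions satisfies φ(f) = max_{μ ∈ ca⁺(C_b)} (⟨f,μ⟩ − φ*_{C_b}(μ)) for all f ∈ C_b, where the supremum is attained. -/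
set_option linter.unusedSectionVars false
set_option maxHeartbeats 1000000


open MeasureTheory Filter Topology Set

variable {Ω : Type*} [TopologicalSpace Ω] [MeasurableSpace Ω] [BorelSpace Ω]

/-- Bounded continuous real-valued functions. -/
def Cb (Ω : Type*) [TopologicalSpace Ω] : Set (Ω → ℝ) :=
  {f | Continuous f ∧ ∃ M : ℝ, ∀ ω, |f ω| ≤ M}

/-- The σ-algebra σ(X) generated by a family X of real-valued functions on Ω. -/
def sigmaGen {Ω : Type*} (X : Set (Ω → ℝ)) : MeasurableSpace Ω :=
  ⨆ f ∈ X, MeasurableSpace.comap f inferInstance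

/-- ca⁺(C_b): countably additive nonnegative measures on σ(C_b) integrating every
nonnegative element of C_b finitely (equivalently, all finite measures on σ(C_b)). -/
def caPosCb (Ω : Type*) [TopologicalSpace Ω] : Set (@Measure Ω (sigmaGen (Cb Ω))) :=
  {μ | ∀ f ∈ Cb Ω, (∀ ω, 0 ≤ f ω) → (∫⁻ ω, ENNReal.ofReal (f ω) ∂μ) < ⊤}

/-- The convex conjugate φ*_{C_b} of a real-valued functional. -/
noncomputable def conjCb (φ : (Ω → ℝ) → ℝ) (μ : @Measure Ω (sigmaGen (Cb Ω))) : EReal :=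
  ⨆ f ∈ Cb Ω, ((∫ ω, f ω ∂μ : ℝ) : EReal) - ((φ f : ℝ) : EReal)


open MeasureTheory Set Topology TopologicalSpace Filter
open scoped ENNReal NNReal BoundedContinuousFunction

noncomputable section

/-- clamp to [0,1] -/
def clamp01 (y : ℝ) : ℝ := min (max y 0) 1

lemma clamp01_continuous : Continuous clamp01 := by
  unfold clamp01; fun_prop

lemma clamp01_nonneg (y : ℝ) : 0 ≤ clamp01 y := le_min (le_max_right _ _) zero_le_one

lemma clamp01_le_one (y : ℝ) : clamp01 y ≤ 1 := min_le_right _ _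

lemma clamp01_eq_one {y : ℝ} (h : 1 ≤ y) : clamp01 y = 1 := by
  unfold clamp01
  rw [max_eq_left (le_trans zero_le_one h), min_eq_right h]

lemma clamp01_eq_zero {y : ℝ} (h : y ≤ 0) : clamp01 y = 0 := by
  unfold clamp01
  rw [max_eq_right h, min_eq_left zero_le_one]

lemma clamp01_pos_imp {y : ℝ} (h : 0 < clamp01 y) : 0 < y := by
  by_contra hy
  rw [clamp01_eq_zero (not_lt.mp hy)] at h
  exact lt_irrefl _ h

/-- staircase identity -/
lemma stair_sum (n : ℕ) {z : ℝ} (hz : 0 ≤ z) :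
    ∑ k ∈ Finset.range n, clamp01 (z - k) = min z n := by
  induction n with
  | zero => simp [min_eq_right hz]
  | succ n ih =>
    rw [Finset.sum_range_succ, ih]
    rcases le_total z n with h | h
    · rw [clamp01_eq_zero (by linarith), min_eq_left h, min_eq_left (by push_cast; linarith)]
      ring
    · rw [min_eq_right h]
      rcases le_total z (n + 1) with h2 | h2
      · have : clamp01 (z - n) = z - n := by
          unfold clamp01
          rw [max_eq_left (by linarith), min_eq_left (by linarith)]
        rw [this, min_eq_left (by push_cast; linarith)]
        ring
      · rw [clamp01_eq_one (by linarith), min_eq_right (by push_cast; linarith)]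
        push_cast; ring

section RMK

variable {T : Type*} [TopologicalSpace T] [CompactSpace T] [T2Space T]
variable (Λ : C(T, ℝ) → ℝ)

/-- test functions dominating the indicator of K -/
def testSet (K : Set T) : Set C(T, ℝ) := {F | (∀ x, 0 ≤ F x) ∧ ∀ x ∈ K, 1 ≤ F x}

lemma one_mem_testSet (K : Set T) : (1 : C(T, ℝ)) ∈ testSet K :=
  ⟨fun _ => zero_le_one, fun _ _ => le_refl 1⟩

variable (hadd : ∀ F G, Λ (F + G) = Λ F + Λ G)
  (hpos : ∀ F : C(T, ℝ), (∀ x, 0 ≤ F x) → 0 ≤ Λ F)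

section aux
include hadd hpos

lemma lam_mono {F G : C(T, ℝ)} (h : ∀ x, F x ≤ G x) : Λ F ≤ Λ G := by
  have h0 : 0 ≤ Λ (G - F) := hpos _ (fun x => by simpa using sub_nonneg.mpr (h x))
  have : Λ G = Λ F + Λ (G - F) := by rw [← hadd]; congr 1; abel
  linarith

/-- the pre-content -/
def lam0 (K : Set T) : ℝ := sInf (Λ '' testSet K)

lemma lam0_nonneg (K : Set T) : 0 ≤ lam0 Λ K :=
  le_csInf (Set.Nonempty.image _ ⟨1, one_mem_testSet K⟩)
    (by rintro y ⟨F, hF, rfl⟩; exact hpos F hF.1)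

lemma bddBelow_lam (K : Set T) : BddBelow (Λ '' testSet K) :=
  ⟨0, by rintro y ⟨F, hF, rfl⟩; exact hpos F hF.1⟩

lemma lam0_le {K : Set T} {F : C(T, ℝ)} (hF : F ∈ testSet K) : lam0 Λ K ≤ Λ F :=
  csInf_le (bddBelow_lam Λ hadd hpos K) ⟨F, hF, rfl⟩

lemma le_lam0 {K : Set T} {c : ℝ} (h : ∀ F ∈ testSet K, c ≤ Λ F) : c ≤ lam0 Λ K :=
  le_csInf (Set.Nonempty.image _ ⟨1, one_mem_testSet K⟩) (by rintro y ⟨F, hF, rfl⟩; exact h F hF)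

lemma lam0_mono {K₁ K₂ : Set T} (h : K₁ ⊆ K₂) : lam0 Λ K₁ ≤ lam0 Λ K₂ :=
  csInf_le_csInf (bddBelow_lam Λ hadd hpos K₁)
    (Set.Nonempty.image _ ⟨1, one_mem_testSet K₂⟩)
    (Set.image_mono (fun F hF => ⟨hF.1, fun x hx => hF.2 x (h hx)⟩))

lemma exists_near_lam0 (K : Set T) {ε : ℝ} (hε : 0 < ε) :
    ∃ F ∈ testSet K, Λ F < lam0 Λ K + ε := by
  have h : sInf (Λ '' testSet K) < lam0 Λ K + ε := by
    have := lam0_nonneg Λ hadd hpos K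
    unfold lam0 at *; linarith
  obtain ⟨y, ⟨F, hF, rfl⟩, hy⟩ :=
    exists_lt_of_csInf_lt (Set.Nonempty.image _ ⟨1, one_mem_testSet K⟩) h
  exact ⟨F, hF, hy⟩

lemma lam0_union_le (K₁ K₂ : Set T) :
    lam0 Λ (K₁ ∪ K₂) ≤ lam0 Λ K₁ + lam0 Λ K₂ := by
  refine le_of_forall_pos_le_add (fun ε hε => ?_)
  obtain ⟨F₁, hF₁, h1⟩ := exists_near_lam0 Λ hadd hpos K₁ (half_pos hε)
  obtain ⟨F₂, hF₂, h2⟩ := exists_near_lam0 Λ hadd hpos K₂ (half_pos hε)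
  have hmem : F₁ + F₂ ∈ testSet (K₁ ∪ K₂) := by
    constructor
    · intro x; simpa using add_nonneg (hF₁.1 x) (hF₂.1 x)
    · rintro x (hx | hx)
      · simpa using le_add_of_le_of_nonneg (hF₁.2 x hx) (hF₂.1 x)
      · simpa using le_add_of_nonneg_of_le (hF₁.1 x) (hF₂.2 x hx)
  have := lam0_le Λ hadd hpos hmem
  rw [hadd] at this
  linarith

lemma lam0_union_disjoint {K₁ K₂ : Set T} (hK₁ : IsCompact K₁) (hK₂ : IsCompact K₂)
    (hd : Disjoint K₁ K₂) :
    lam0 Λ (K₁ ∪ K₂) = lam0 Λ K₁ + lam0 Λ K₂ := by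
  refine le_antisymm (lam0_union_le Λ hadd hpos K₁ K₂) ?_
  obtain ⟨u, hu0, hu1, hu01⟩ := exists_continuous_zero_one_of_isClosed
    hK₂.isClosed hK₁.isClosed hd.symm
  refine le_lam0 Λ hadd hpos (fun F hF => ?_)
  have hmem1 : F * u ∈ testSet K₁ := by
    constructor
    · intro x; exact mul_nonneg (hF.1 x) (hu01 x).1
    · intro x hx
      have : u x = 1 := hu1 hx
      simpa [this] using hF.2 x (Or.inl hx)
  have hmem2 : F * (1 - u) ∈ testSet K₂ := by
    constructor
    · intro x; exact mul_nonneg (hF.1 x) (by have := (hu01 x).2; simpa using by linarith)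
    · intro x hx
      have : u x = 0 := hu0 hx
      simpa [this] using hF.2 x (Or.inr hx)
  have key : Λ (F * u) + Λ (F * (1 - u)) = Λ F := by
    rw [← hadd]; congr 1; ring
  have i1 := lam0_le Λ hadd hpos hmem1
  have i2 := lam0_le Λ hadd hpos hmem2
  linarith

/-- The content induced by `Λ`. -/
def rieszCont : Content T where
  toFun K := Real.toNNReal (lam0 Λ K)
  mono' K₁ K₂ h := Real.toNNReal_mono (lam0_mono Λ hadd hpos h)
  sup_disjoint' K₁ K₂ hd h₁ h₂ := by
    simp only [Compacts.coe_sup] at *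
    rw [← Real.toNNReal_add (lam0_nonneg Λ hadd hpos _) (lam0_nonneg Λ hadd hpos _)]
    exact congrArg _ (lam0_union_disjoint Λ hadd hpos K₁.isCompact K₂.isCompact hd)
  sup_le' K₁ K₂ := by
    rw [← Real.toNNReal_add (lam0_nonneg Λ hadd hpos _) (lam0_nonneg Λ hadd hpos _)]
    exact Real.toNNReal_mono (lam0_union_le Λ hadd hpos K₁ K₂)


section meas
variable [MeasurableSpace T] [BorelSpace T]

/-- The Riesz measure -/
def rieszMeas : Measure T := (rieszCont Λ hadd hpos).measure

lemma rieszMeas_open {U : Set T} (hU : IsOpen U) :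
    rieszMeas Λ hadd hpos U = (rieszCont Λ hadd hpos).innerContent ⟨U, hU⟩ := by
  rw [rieszMeas, Content.measure_apply _ hU.measurableSet]
  exact Content.outerMeasure_opens _ ⟨U, hU⟩

lemma rieszMeas_open_le {U : Set T} (hU : IsOpen U) {c : ℝ}
    (h : ∀ K : Set T, IsCompact K → K ⊆ U → lam0 Λ K ≤ c) :
    rieszMeas Λ hadd hpos U ≤ ENNReal.ofReal c := by
  rw [rieszMeas_open Λ hadd hpos hU]
  refine iSup₂_le (fun K hK => ?_)
  have h1 : lam0 Λ (K : Set T) ≤ c := h K K.isCompact hK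
  calc ((rieszCont Λ hadd hpos).toFun K : ℝ≥0∞) = ENNReal.ofReal (lam0 Λ K) := by
        simp [rieszCont, ENNReal.ofReal]
    _ ≤ ENNReal.ofReal c := ENNReal.ofReal_le_ofReal h1

lemma rieszMeas_univ_le : rieszMeas Λ hadd hpos univ ≤ ENNReal.ofReal (Λ 1) := by
  refine rieszMeas_open_le Λ hadd hpos isOpen_univ (fun K hK _ => ?_)
  exact lam0_le Λ hadd hpos (one_mem_testSet K)

instance : IsFiniteMeasure (rieszMeas Λ hadd hpos) :=
  ⟨lt_of_le_of_lt (rieszMeas_univ_le Λ hadd hpos) ENNReal.ofReal_lt_top⟩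

lemma lam0_le_meas_open {K U : Set T} (hK : IsCompact K) (hU : IsOpen U) (hKU : K ⊆ U) :
    ENNReal.ofReal (lam0 Λ K) ≤ rieszMeas Λ hadd hpos U := by
  rw [rieszMeas_open Λ hadd hpos hU]
  have := Content.le_innerContent (rieszCont Λ hadd hpos) ⟨K, hK⟩ ⟨U, hU⟩ hKU
  calc ENNReal.ofReal (lam0 Λ K)
      = ((rieszCont Λ hadd hpos).toFun ⟨K, hK⟩ : ℝ≥0∞) := by simp [rieszCont, ENNReal.ofReal]
    _ ≤ _ := this

lemma meas_open_le_lam0 {U K : Set T} (hU : IsOpen U) (hK : IsCompact K) (hUK : U ⊆ K) :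
    rieszMeas Λ hadd hpos U ≤ ENNReal.ofReal (lam0 Λ K) := by
  refine rieszMeas_open_le Λ hadd hpos hU (fun C hC hCU => ?_)
  exact lam0_mono Λ hadd hpos (hCU.trans hUK)


lemma lam_zero : Λ 0 = 0 := by
  have := hadd 0 0; simp at this; linarith

lemma lam_sum {ι : Type*} (s : Finset ι) (f : ι → C(T, ℝ)) :
    Λ (∑ i ∈ s, f i) = ∑ i ∈ s, Λ (f i) := by
  classical
  induction s using Finset.induction with
  | empty => simpa using lam_zero Λ hadd hpos
  | insert _ _ h ih => rw [Finset.sum_insert h, Finset.sum_insert h, hadd, ih]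

lemma cm_integrable (F : C(T, ℝ)) : Integrable F (rieszMeas Λ hadd hpos) := by
  refine Integrable.mono' (integrable_const ‖F‖) F.continuous.aestronglyMeasurable ?_
  exact Filter.Eventually.of_forall (fun x => F.norm_coe_le_norm x)

/-- the staircase function -/
def hkf (F : C(T, ℝ)) (n k : ℕ) : C(T, ℝ) :=
  ⟨fun x => clamp01 ((n : ℝ) * F x - k), clamp01_continuous.comp (by fun_prop)⟩

variable {F : C(T, ℝ)} {n : ℕ}

omit hadd hpos in
lemma hkf_sum (hF0 : ∀ x, 0 ≤ F x) (hF1 : ∀ x, F x ≤ 1) (x : T) :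
    ∑ k ∈ Finset.range n, hkf F n k x = n * F x := by
  have h0 : (0:ℝ) ≤ n * F x := mul_nonneg (Nat.cast_nonneg n) (hF0 x)
  have := stair_sum n h0
  simp only [hkf, ContinuousMap.coe_mk] at *
  rw [this, min_eq_left]
  exact mul_le_of_le_one_right (Nat.cast_nonneg n) (hF1 x)

def KSet (F : C(T, ℝ)) (n : ℕ) (t : ℝ) : Set T := {x | t ≤ (n : ℝ) * F x}
def USet (F : C(T, ℝ)) (n : ℕ) (t : ℝ) : Set T := {x | t < (n : ℝ) * F x}

omit hadd hpos in
lemma KSet_compact (t : ℝ) : IsCompact (KSet F n t) :=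
  (isClosed_le continuous_const (by fun_prop)).isCompact

omit hadd hpos in
lemma USet_open (t : ℝ) : IsOpen (USet F n t) :=
  isOpen_lt continuous_const (by fun_prop)

omit hadd hpos in
lemma hkf_mem_testSet (k : ℕ) : hkf F n k ∈ testSet (KSet F n ((k : ℝ) + 1)) := by
  constructor
  · intro x; exact clamp01_nonneg _
  · intro x hx
    have : (1:ℝ) ≤ (n : ℝ) * F x - k := by
      have : ((k:ℝ) + 1) ≤ n * F x := hx
      linarith
    exact (clamp01_eq_one this).ge

omit hadd hpos in
lemma hkf_le_test {k : ℕ} {G : C(T, ℝ)} (hG : G ∈ testSet (KSet F n (k : ℝ))) :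
    ∀ x, hkf F n k x ≤ G x := by
  intro x
  by_cases hx : (k : ℝ) ≤ (n : ℝ) * F x
  · exact le_trans (clamp01_le_one _) (hG.2 x hx)
  · have : (n:ℝ) * F x - k ≤ 0 := by push_neg at hx; linarith
    simp only [hkf, ContinuousMap.coe_mk]
    rw [clamp01_eq_zero this]
    exact hG.1 x

lemma lam_hkf_le (k : ℕ) : Λ (hkf F n k) ≤ lam0 Λ (KSet F n (k : ℝ)) :=
  le_lam0 Λ hadd hpos (fun G hG => lam_mono Λ hadd hpos (hkf_le_test hG))

lemma lam_hkf_ge (k : ℕ) : lam0 Λ (KSet F n ((k : ℝ) + 1)) ≤ Λ (hkf F n k) :=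
  lam0_le Λ hadd hpos (hkf_mem_testSet k)

def aR (F : C(T, ℝ)) (n : ℕ) (Λ : C(T, ℝ) → ℝ) (hadd : ∀ F G, Λ (F + G) = Λ F + Λ G)
    (hpos : ∀ F : C(T, ℝ), (∀ x, 0 ≤ F x) → 0 ≤ Λ F) (t : ℝ) : ℝ :=
  (rieszMeas Λ hadd hpos (USet F n t)).toReal

lemma measure_ne_top' (s : Set T) : rieszMeas Λ hadd hpos s ≠ ⊤ := measure_ne_top _ s

lemma aR_anti {s t : ℝ} (h : s ≤ t) : aR F n Λ hadd hpos t ≤ aR F n Λ hadd hpos s := by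
  refine ENNReal.toReal_mono (measure_ne_top' Λ hadd hpos _) (measure_mono ?_)
  intro x hx; exact lt_of_le_of_lt h hx

lemma aR_nonneg (t : ℝ) : 0 ≤ aR F n Λ hadd hpos t := ENNReal.toReal_nonneg

lemma aR_le_B (t : ℝ) :
    aR F n Λ hadd hpos t ≤ (rieszMeas Λ hadd hpos univ).toReal :=
  ENNReal.toReal_mono (measure_ne_top' Λ hadd hpos _) (measure_mono (subset_univ _))

/-- bridging: measure of U-set below lam0 of K-set -/
lemma aR_le_lam0 (t : ℝ) : aR F n Λ hadd hpos t ≤ lam0 Λ (KSet F n t) := by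
  have h := meas_open_le_lam0 Λ hadd hpos (USet_open (F := F) (n := n) t)
    (KSet_compact (F := F) (n := n) t) (fun x hx => le_of_lt (show t < (n:ℝ) * F x from hx))
  have := ENNReal.toReal_mono ENNReal.ofReal_ne_top h
  rwa [ENNReal.toReal_ofReal (lam0_nonneg Λ hadd hpos _)] at this

lemma lam0_le_aR {s t : ℝ} (h : s < t) :
    lam0 Λ (KSet F n t) ≤ aR F n Λ hadd hpos s := by
  have hsub : KSet F n t ⊆ USet F n s := fun x hx => lt_of_lt_of_le h hx
  have h2 := lam0_le_meas_open Λ hadd hpos (KSet_compact (F := F) (n := n) t)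
    (USet_open (F := F) (n := n) s) hsub
  have := ENNReal.toReal_mono (measure_ne_top' Λ hadd hpos _) h2
  rwa [ENNReal.toReal_ofReal (lam0_nonneg Λ hadd hpos _)] at this

lemma integral_hkf_le (k : ℕ) :
    ∫ x, hkf F n k x ∂(rieszMeas Λ hadd hpos) ≤ aR F n Λ hadd hpos (k : ℝ) := by
  have hmeas := (USet_open (F := F) (n := n) (k : ℝ)).measurableSet
  have hle : ∀ x, hkf F n k x ≤ (USet F n (k:ℝ)).indicator (fun _ => (1:ℝ)) x := by
    intro x
    by_cases hx : x ∈ USet F n (k:ℝ)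
    · rw [indicator_of_mem hx]; exact clamp01_le_one _
    · rw [indicator_of_notMem hx]
      have : ¬ ((k:ℝ) < (n:ℝ) * F x) := hx
      have h0 : (n:ℝ) * F x - k ≤ 0 := by push_neg at this; linarith
      simp only [hkf, ContinuousMap.coe_mk]
      exact (clamp01_eq_zero h0).le
  have hint : Integrable ((USet F n (k:ℝ)).indicator (fun _ => (1:ℝ)))
      (rieszMeas Λ hadd hpos) := (integrable_const 1).indicator hmeas
  calc ∫ x, hkf F n k x ∂(rieszMeas Λ hadd hpos)
      ≤ ∫ x, (USet F n (k:ℝ)).indicator (fun _ => (1:ℝ)) x ∂(rieszMeas Λ hadd hpos) :=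
        integral_mono (cm_integrable Λ hadd hpos _) hint hle
    _ = aR F n Λ hadd hpos (k : ℝ) := by
        rw [integral_indicator_const (1:ℝ) hmeas]; simp [aR, Measure.real]

lemma integral_hkf_ge (k : ℕ) :
    aR F n Λ hadd hpos ((k : ℝ) + 1) ≤ ∫ x, hkf F n k x ∂(rieszMeas Λ hadd hpos) := by
  have hmeasK := (KSet_compact (F := F) (n := n) ((k:ℝ)+1)).isClosed.measurableSet
  have hge : ∀ x, (KSet F n ((k:ℝ)+1)).indicator (fun _ => (1:ℝ)) x ≤ hkf F n k x := by
    intro x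
    by_cases hx : x ∈ KSet F n ((k:ℝ)+1)
    · rw [indicator_of_mem hx]
      exact ((hkf_mem_testSet (F := F) (n := n) k).2 x hx)
    · rw [indicator_of_notMem hx]; exact clamp01_nonneg _
  have hint : Integrable ((KSet F n ((k:ℝ)+1)).indicator (fun _ => (1:ℝ)))
      (rieszMeas Λ hadd hpos) := (integrable_const 1).indicator hmeasK
  have step : (rieszMeas Λ hadd hpos (KSet F n ((k:ℝ)+1))).toReal
      = ∫ x, (KSet F n ((k:ℝ)+1)).indicator (fun _ => (1:ℝ)) x ∂(rieszMeas Λ hadd hpos) := by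
    rw [integral_indicator_const (1:ℝ) hmeasK]; simp [Measure.real]
  have husub : USet F n ((k:ℝ)+1) ⊆ KSet F n ((k:ℝ)+1) := fun x hx => le_of_lt (show ((k:ℝ)+1) < (n:ℝ) * F x from hx)
  calc aR F n Λ hadd hpos ((k : ℝ) + 1)
      ≤ (rieszMeas Λ hadd hpos (KSet F n ((k:ℝ)+1))).toReal :=
        ENNReal.toReal_mono (measure_ne_top' Λ hadd hpos _) (measure_mono husub)
    _ = _ := step
    _ ≤ _ := integral_mono hint (cm_integrable Λ hadd hpos _) hge


def cseq (F : C(T, ℝ)) (n : ℕ) (Λ : C(T, ℝ) → ℝ) (hadd : ∀ F G, Λ (F + G) = Λ F + Λ G)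
    (hpos : ∀ F : C(T, ℝ), (∀ x, 0 ≤ F x) → 0 ≤ Λ F) (k : ℕ) : ℝ :=
  aR F n Λ hadd hpos ((k : ℝ) - 1)

lemma key_k (k : ℕ) :
    |Λ (hkf F n k) - ∫ x, hkf F n k x ∂(rieszMeas Λ hadd hpos)|
      ≤ cseq F n Λ hadd hpos k - cseq F n Λ hadd hpos (k + 2) := by
  have hc2 : cseq F n Λ hadd hpos (k + 2) = aR F n Λ hadd hpos ((k : ℝ) + 1) := by
    unfold cseq; congr 1; push_cast; ring
  have h1 : Λ (hkf F n k) ≤ cseq F n Λ hadd hpos k :=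
    le_trans (lam_hkf_le Λ hadd hpos k) (lam0_le_aR Λ hadd hpos (by linarith [sub_lt_self (k:ℝ) one_pos]))
  have h2 : cseq F n Λ hadd hpos (k + 2) ≤ Λ (hkf F n k) := by
    rw [hc2]
    exact le_trans (aR_le_lam0 Λ hadd hpos _) (lam_hkf_ge Λ hadd hpos k)
  have h3 : ∫ x, hkf F n k x ∂(rieszMeas Λ hadd hpos) ≤ cseq F n Λ hadd hpos k :=
    le_trans (integral_hkf_le Λ hadd hpos k) (aR_anti Λ hadd hpos (by linarith))
  have h4 : cseq F n Λ hadd hpos (k + 2) ≤ ∫ x, hkf F n k x ∂(rieszMeas Λ hadd hpos) := by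
    rw [hc2]; exact integral_hkf_ge Λ hadd hpos k
  rw [abs_le]; constructor <;> linarith

lemma lam_nsmul (m : ℕ) (G : C(T, ℝ)) : Λ (m • G) = m * Λ G := by
  induction m with
  | zero => simpa using lam_zero Λ hadd hpos
  | succ m ih => rw [succ_nsmul, hadd, ih]; push_cast; ring

lemma telescope (m : ℕ) :
    ∑ k ∈ Finset.range m, (cseq F n Λ hadd hpos k - cseq F n Λ hadd hpos (k + 2))
      = (cseq F n Λ hadd hpos 0 - cseq F n Λ hadd hpos m)
        + (cseq F n Λ hadd hpos 1 - cseq F n Λ hadd hpos (m + 1)) := by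
  have e : ∀ k, cseq F n Λ hadd hpos k - cseq F n Λ hadd hpos (k + 2)
      = (cseq F n Λ hadd hpos k - cseq F n Λ hadd hpos (k + 1))
        + (cseq F n Λ hadd hpos (k + 1) - cseq F n Λ hadd hpos (k + 2)) := by
    intro k; ring
  simp_rw [e]
  rw [Finset.sum_add_distrib, Finset.sum_range_sub' (fun k => cseq F n Λ hadd hpos k),
    Finset.sum_range_sub' (fun k => cseq F n Λ hadd hpos (k + 1))]

lemma integral_eq_lam_01 (F : C(T, ℝ)) (hF0 : ∀ x, 0 ≤ F x) (hF1 : ∀ x, F x ≤ 1) :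
    ∫ x, F x ∂(rieszMeas Λ hadd hpos) = Λ F := by
  set B : ℝ := (rieszMeas Λ hadd hpos univ).toReal with hB
  have key : ∀ n : ℕ, (n : ℝ) * |Λ F - ∫ x, F x ∂(rieszMeas Λ hadd hpos)| ≤ 2 * B := by
    intro n
    have hsumfun : (∑ k ∈ Finset.range n, hkf F n k) = n • F := by
      ext x
      rw [ContinuousMap.coe_sum, Finset.sum_apply]
      simpa using hkf_sum hF0 hF1 x
    have hlam : (n : ℝ) * Λ F = ∑ k ∈ Finset.range n, Λ (hkf F n k) := by
      rw [← lam_sum Λ hadd hpos, hsumfun, lam_nsmul Λ hadd hpos]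
    have hint : (n : ℝ) * ∫ x, F x ∂(rieszMeas Λ hadd hpos)
        = ∑ k ∈ Finset.range n, ∫ x, hkf F n k x ∂(rieszMeas Λ hadd hpos) := by
      rw [← integral_finset_sum _ (fun k _ => cm_integrable Λ hadd hpos _)]
      have : ∀ x, (∑ k ∈ Finset.range n, fun x => hkf F n k x) x = (n : ℝ) * F x := by
        intro x
        rw [Finset.sum_apply]
        exact hkf_sum hF0 hF1 x
      rw [show (fun x => ∑ k ∈ Finset.range n, hkf F n k x) = fun x => (n:ℝ) * F x by
        funext x; simpa using hkf_sum hF0 hF1 x]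
      rw [integral_const_mul]
    have hsum_le : |∑ k ∈ Finset.range n, (Λ (hkf F n k)
        - ∫ x, hkf F n k x ∂(rieszMeas Λ hadd hpos))| ≤ 2 * B := by
      calc |∑ k ∈ Finset.range n, (Λ (hkf F n k)
            - ∫ x, hkf F n k x ∂(rieszMeas Λ hadd hpos))|
          ≤ ∑ k ∈ Finset.range n, |Λ (hkf F n k)
            - ∫ x, hkf F n k x ∂(rieszMeas Λ hadd hpos)| := Finset.abs_sum_le_sum_abs _ _
        _ ≤ ∑ k ∈ Finset.range n, (cseq F n Λ hadd hpos k - cseq F n Λ hadd hpos (k + 2)) :=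
            Finset.sum_le_sum (fun k _ => key_k Λ hadd hpos k)
        _ ≤ 2 * B := by
            rw [telescope Λ hadd hpos n]
            have b0 := aR_le_B Λ hadd hpos (F := F) (n := n) ((0:ℝ) - 1)
            have b1 := aR_le_B Λ hadd hpos (F := F) (n := n) ((1:ℝ) - 1)
            have c0 := aR_nonneg Λ hadd hpos (F := F) (n := n) (((n:ℕ):ℝ) - 1)
            have c1 := aR_nonneg Λ hadd hpos (F := F) (n := n) ((((n:ℕ)+1:ℕ)):ℝ) 
            unfold cseq
            push_cast
            push_cast at b0 b1 c0 c1
            have c1' := aR_nonneg Λ hadd hpos (F := F) (n := n) (((n:ℝ) + 1) - 1)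
            linarith
    rw [mul_comm, ← abs_of_nonneg (Nat.cast_nonneg (α := ℝ) n), ← abs_mul]
    rw [sub_mul, mul_comm (Λ F), mul_comm (∫ x, F x ∂(rieszMeas Λ hadd hpos)), hlam, hint]
    exact le_trans (le_of_eq (congrArg _ (by rw [← Finset.sum_sub_distrib]))) hsum_le
  by_contra hne
  have hd : 0 < |Λ F - ∫ x, F x ∂(rieszMeas Λ hadd hpos)| := by
    rw [abs_pos]
    intro h0
    exact hne (by linarith)
  obtain ⟨n, hn⟩ := exists_nat_gt ((2 * B) / |Λ F - ∫ x, F x ∂(rieszMeas Λ hadd hpos)|)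
  have := key n
  rw [div_lt_iff₀ hd] at hn
  linarith

lemma integral_eq_lam (hsmul : ∀ (r : ℝ) (G : C(T, ℝ)), Λ (r • G) = r * Λ G) (F : C(T, ℝ)) :
    ∫ x, F x ∂(rieszMeas Λ hadd hpos) = Λ F := by
  set ν := rieszMeas Λ hadd hpos with hν
  set c : ℝ := ‖F‖ with hc
  have hc0 : 0 ≤ c := norm_nonneg F
  have hB : (ν univ).toReal = Λ 1 := by
    have := integral_eq_lam_01 Λ hadd hpos 1 (fun _ => zero_le_one) (fun _ => le_refl 1)
    simpa [Measure.real] using this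
  set G : C(T, ℝ) := (2 * c + 1)⁻¹ • (F + ContinuousMap.const T c) with hG
  have hGx : ∀ x, G x = (2 * c + 1)⁻¹ * (F x + c) := fun x => rfl
  have hden : (0:ℝ) < 2 * c + 1 := by linarith
  have hG0 : ∀ x, 0 ≤ G x := by
    intro x
    rw [hGx]
    have hx := abs_le.mp (show |F x| ≤ c from by
      simpa [Real.norm_eq_abs] using F.norm_coe_le_norm x)
    exact mul_nonneg (inv_nonneg.mpr hden.le) (by linarith [hx.1])
  have hG1 : ∀ x, G x ≤ 1 := by
    intro x
    rw [hGx]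
    have h2 := (abs_le.mp (show |F x| ≤ c from by
      simpa [Real.norm_eq_abs] using F.norm_coe_le_norm x)).2
    rw [inv_mul_le_iff₀ hden]
    linarith
  have hGint := integral_eq_lam_01 Λ hadd hpos G hG0 hG1
  have hΛG : Λ G = (2 * c + 1)⁻¹ * (Λ F + c * Λ 1) := by
    rw [hG, hsmul, hadd]
    have : ContinuousMap.const T c = c • (1 : C(T, ℝ)) := by ext x; simp
    rw [this, hsmul]
  have hIG : ∫ x, G x ∂ν = (2 * c + 1)⁻¹ * ((∫ x, F x ∂ν) + c * (ν univ).toReal) := by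
    have : ∀ x, G x = (2 * c + 1)⁻¹ * (F x + c) := hGx
    rw [show (fun x => G x) = fun x => (2 * c + 1)⁻¹ * (F x + c) by funext x; exact hGx x]
    rw [integral_const_mul, integral_add (cm_integrable Λ hadd hpos F) (integrable_const c)]
    rw [integral_const]
    simp only [smul_eq_mul, Measure.real]
    ring
  rw [hIG, hΛG, hB] at hGint
  have := mul_left_cancel₀ (inv_ne_zero hden.ne') hGint
  linarith

end meas
end aux
end RMK

open Filter
open scoped BoundedContinuousFunction



section Subgrad

variable (φ : (Ω → ℝ) → ℝ)
  (hmono : ∀ f ∈ Bb Ω, ∀ g ∈ Bb Ω, (∀ ω, g ω ≤ f ω) → φ g ≤ φ f)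
  (hconv : ∀ f ∈ Bb Ω, ∀ g ∈ Bb Ω, ∀ a b : ℝ, 0 ≤ a → 0 ≤ b → a + b = 1 →
      φ (a • f + b • g) ≤ a * φ f + b * φ g)

lemma bcf_mem_Bb (h : Ω →ᵇ ℝ) : ⇑h ∈ Bb Ω :=
  ⟨h.continuous.measurable, ‖h‖, fun ω => by
    simpa [Real.norm_eq_abs] using h.norm_coe_le_norm ω⟩

include hmono hconv

lemma phi_lip (h₀ h : Ω →ᵇ ℝ) {δ : ℝ} (hδ0 : 0 ≤ δ) (hδ1 : δ ≤ 1)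
    (hd : ‖h - h₀‖ ≤ δ) :
    |φ ⇑h - φ ⇑h₀| ≤ δ * (φ ⇑(h₀ + 1) - φ ⇑h₀) := by
  have hpt : ∀ ω, |h ω - h₀ ω| ≤ δ := by
    intro ω
    have := (h - h₀).norm_coe_le_norm ω
    simp only [BoundedContinuousFunction.coe_sub, Pi.sub_apply, Real.norm_eq_abs] at this
    linarith
  have hub : φ ⇑h ≤ φ ⇑(h₀ + δ • (1 : Ω →ᵇ ℝ)) := by
    refine hmono _ (bcf_mem_Bb _) _ (bcf_mem_Bb _) (fun ω => ?_)
    have := (abs_le.mp (hpt ω)).2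
    simp only [BoundedContinuousFunction.coe_add, BoundedContinuousFunction.coe_smul,
      BoundedContinuousFunction.coe_one, Pi.add_apply, Pi.smul_apply, Pi.one_apply,
      smul_eq_mul, mul_one]
    linarith
  have hcomb : (⇑(h₀ + δ • (1 : Ω →ᵇ ℝ)) : Ω → ℝ) = δ • ⇑(h₀ + 1) + (1 - δ) • ⇑h₀ := by
    funext ω
    simp only [BoundedContinuousFunction.coe_add, BoundedContinuousFunction.coe_smul,
      BoundedContinuousFunction.coe_one, Pi.add_apply, Pi.smul_apply, Pi.one_apply,
      smul_eq_mul, mul_one]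
    ring
  have hcv := hconv _ (bcf_mem_Bb (h₀ + 1)) _ (bcf_mem_Bb h₀) δ (1 - δ) hδ0 (by linarith)
    (by ring)
  rw [← hcomb] at hcv
  have hub2 : φ ⇑h - φ ⇑h₀ ≤ δ * (φ ⇑(h₀ + 1) - φ ⇑h₀) := by
    have := le_trans hub hcv
    nlinarith
  -- lower bound
  have hlb : φ ⇑(h₀ - δ • (1 : Ω →ᵇ ℝ)) ≤ φ ⇑h := by
    refine hmono _ (bcf_mem_Bb _) _ (bcf_mem_Bb _) (fun ω => ?_)
    have := (abs_le.mp (hpt ω)).1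
    simp only [BoundedContinuousFunction.coe_sub, BoundedContinuousFunction.coe_smul,
      BoundedContinuousFunction.coe_one, Pi.sub_apply, Pi.smul_apply, Pi.one_apply,
      smul_eq_mul, mul_one]
    linarith
  have hcomb2 : (⇑h₀ : Ω → ℝ)
      = (1 / (1 + δ)) • ⇑(h₀ - δ • (1 : Ω →ᵇ ℝ)) + (δ / (1 + δ)) • ⇑(h₀ + 1) := by
    funext ω
    have hδ : (1 : ℝ) + δ ≠ 0 := by linarith
    simp only [BoundedContinuousFunction.coe_add, BoundedContinuousFunction.coe_sub,
      BoundedContinuousFunction.coe_smul, BoundedContinuousFunction.coe_one, Pi.add_apply,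
      Pi.sub_apply, Pi.smul_apply, Pi.one_apply, smul_eq_mul, mul_one]
    field_simp
    ring
  have hcv2 := hconv _ (bcf_mem_Bb (h₀ - δ • (1 : Ω →ᵇ ℝ))) _ (bcf_mem_Bb (h₀ + 1))
    (1 / (1 + δ)) (δ / (1 + δ)) (by positivity) (by positivity)
    (by field_simp)
  rw [← hcomb2] at hcv2
  have hlb2 : φ ⇑h₀ - φ ⇑h ≤ δ * (φ ⇑(h₀ + 1) - φ ⇑h₀) := by
    have h1δ : (0:ℝ) < 1 + δ := by linarith
    have := le_trans (le_of_eq rfl) hcv2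
    have hkey : (1 + δ) * φ ⇑h₀ ≤ φ ⇑(h₀ - δ • (1 : Ω →ᵇ ℝ)) + δ * φ ⇑(h₀ + 1) := by
      have h2 := mul_le_mul_of_nonneg_left hcv2 h1δ.le
      have h3 : (1 + δ) * ((1 / (1 + δ)) * φ ⇑(h₀ - δ • (1 : Ω →ᵇ ℝ))
          + (δ / (1 + δ)) * φ ⇑(h₀ + 1))
          = φ ⇑(h₀ - δ • (1 : Ω →ᵇ ℝ)) + δ * φ ⇑(h₀ + 1) := by
        field_simp
      linarith
    have := le_trans hkey (by linarith : φ ⇑(h₀ - δ • (1 : Ω →ᵇ ℝ)) + δ * φ ⇑(h₀ + 1)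
      ≤ φ ⇑h + δ * φ ⇑(h₀ + 1))
    linarith
  rw [abs_le]
  constructor <;> linarith

lemma phi_bcf_continuous : Continuous (fun h : Ω →ᵇ ℝ => φ ⇑h) := by
  rw [continuous_iff_continuousAt]
  intro h₀
  rw [Metric.continuousAt_iff]
  intro ε hε
  set C : ℝ := φ ⇑(h₀ + 1) - φ ⇑h₀ with hC
  have hC0 : 0 ≤ C := by
    have := hmono _ (bcf_mem_Bb (h₀ + 1)) _ (bcf_mem_Bb h₀) (fun ω => by
      simp only [BoundedContinuousFunction.coe_add, BoundedContinuousFunction.coe_one,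
        Pi.add_apply, Pi.one_apply]
      linarith)
    simp only [hC]; linarith
  refine ⟨min 1 (ε / (2 * (C + 1))), lt_min one_pos (by positivity), fun {h} hd => ?_⟩
  have hδ1 : min 1 (ε / (2 * (C + 1))) ≤ 1 := min_le_left _ _
  have hδ0 : 0 ≤ min 1 (ε / (2 * (C + 1))) := le_min zero_le_one (by positivity)
  have := phi_lip φ hmono hconv h₀ h hδ0 hδ1 (by
    rw [← dist_eq_norm]
    exact hd.le)
  rw [Real.dist_eq]
  calc |φ ⇑h - φ ⇑h₀| ≤ min 1 (ε / (2 * (C + 1))) * C := this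
    _ ≤ (ε / (2 * (C + 1))) * C := by
        exact mul_le_mul_of_nonneg_right (min_le_right _ _) hC0
    _ < ε := by
        rw [div_mul_eq_mul_div, div_lt_iff₀ (by positivity)]
        nlinarith

theorem exists_subgradient (f₀ : Ω →ᵇ ℝ) :
    ∃ L : (Ω →ᵇ ℝ) → ℝ,
      (∀ g h, L (g + h) = L g + L h) ∧
      (∀ (r : ℝ) g, L (r • g) = r * L g) ∧
      (∀ h : Ω →ᵇ ℝ, (∀ ω, 0 ≤ h ω) → 0 ≤ L h) ∧
      (∀ h : Ω →ᵇ ℝ, φ ⇑f₀ + (L h - L f₀) ≤ φ ⇑h) := by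
  classical
  set Φ : (Ω →ᵇ ℝ) → ℝ := fun h => φ ⇑h with hΦ
  have hΦcont : Continuous Φ := phi_bcf_continuous φ hmono hconv
  set s : Set ((Ω →ᵇ ℝ) × ℝ) := {p | Φ p.1 < p.2} with hs
  have hopen : IsOpen s := by
    have : s = (fun p : (Ω →ᵇ ℝ) × ℝ => p.2 - Φ p.1) ⁻¹' (Set.Ioi 0) := by
      ext p; simp [hs, sub_pos]
    rw [this]
    exact ((continuous_snd.sub (hΦcont.comp continuous_fst))).isOpen_preimage _ isOpen_Ioi
  have hconvs : Convex ℝ s := by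
    rintro ⟨p1, t1⟩ hp ⟨p2, t2⟩ hq a b ha hb hab
    simp only [hs, Set.mem_setOf_eq] at hp hq ⊢
    have hcv := hconv _ (bcf_mem_Bb p1) _ (bcf_mem_Bb p2) a b ha hb hab
    have hco : (⇑(a • p1 + b • p2) : Ω → ℝ) = a • ⇑p1 + b • ⇑p2 := by
      funext ω; simp
    calc Φ (a • p1 + b • p2) = φ ⇑(a • p1 + b • p2) := rfl
      _ = φ (a • ⇑p1 + b • ⇑p2) := by rw [hco]
      _ ≤ a * φ ⇑p1 + b * φ ⇑p2 := hcv
      _ < a * t1 + b * t2 := by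
          rcases eq_or_lt_of_le ha with rfl | ha'
          · simp only [zero_mul, zero_add]
            have hb1 : b = 1 := by linarith
            rw [hb1] at *
            simpa using hq
          · rcases eq_or_lt_of_le hb with rfl | hb'
            · have ha1 : a = 1 := by linarith
              rw [ha1] at *
              simpa using hp
            · have := mul_lt_mul_of_pos_left hp ha'
              have := mul_lt_mul_of_pos_left hq hb'
              linarith
  have hx : (f₀, Φ f₀) ∉ s := by simp [hs]
  obtain ⟨ℓ, hℓ⟩ := geometric_hahn_banach_open_point hconvs hopen hx
  set c : ℝ := ℓ (0, 1) with hc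
  have hsplit : ∀ (h : Ω →ᵇ ℝ) (t : ℝ), ℓ (h, t) = ℓ (h, 0) + t * c := by
    intro h t
    have : (h, t) = (h, (0:ℝ)) + t • ((0 : Ω →ᵇ ℝ), (1:ℝ)) := by
      simp [Prod.ext_iff]
    rw [this, map_add, ℓ.map_smul]
    simp [hc]
  have hcneg : c < 0 := by
    have h1 : (f₀, Φ f₀ + 1) ∈ s := by simp [hs]
    have := hℓ _ h1
    rw [hsplit f₀ (Φ f₀ + 1), hsplit f₀ (Φ f₀)] at this
    nlinarith
  set d : ℝ := -c with hd
  have hd0 : 0 < d := by simp [hd]; linarith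
  have key : ∀ h : Ω →ᵇ ℝ, ℓ (h, 0) + Φ h * c ≤ ℓ (f₀, 0) + Φ f₀ * c := by
    intro h
    refine le_of_forall_pos_le_add (fun ε hε => ?_)
    have hmem : (h, Φ h + ε / d) ∈ s := by
      simp only [hs, Set.mem_setOf_eq]
      have : 0 < ε / d := by positivity
      linarith
    have := hℓ _ hmem
    rw [hsplit h (Φ h + ε / d), hsplit f₀ (Φ f₀)] at this
    have hεc : (ε / d) * c = -ε := by
      field_simp [hd]
      linarith
    nlinarith [this, hεc]
  refine ⟨fun h => ℓ (h, 0) / d, ?_, ?_, ?_, ?_⟩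
  · intro g h
    show ℓ ((g + h : Ω →ᵇ ℝ), (0:ℝ)) / d = ℓ (g, (0:ℝ)) / d + ℓ (h, (0:ℝ)) / d
    have : ((g + h : Ω →ᵇ ℝ), (0:ℝ)) = (g, (0:ℝ)) + (h, (0:ℝ)) := by simp [Prod.ext_iff]
    rw [this, map_add]
    ring
  · intro r g
    show ℓ ((r • g : Ω →ᵇ ℝ), (0:ℝ)) / d = r * (ℓ (g, (0:ℝ)) / d)
    have : ((r • g : Ω →ᵇ ℝ), (0:ℝ)) = r • (g, (0:ℝ)) := by simp [Prod.ext_iff]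
    rw [this, ℓ.map_smul]
    simp only [smul_eq_mul]
    ring
  · -- positivity, derived from subgradient property below; do it directly
    intro h hh
    have hsub : ∀ k : Ω →ᵇ ℝ, Φ f₀ + (ℓ (k, 0) / d - ℓ (f₀, 0) / d) ≤ Φ k := by
      intro k
      have := key k
      have h2 : ℓ (k, 0) - ℓ (f₀, 0) ≤ (Φ k - Φ f₀) * d := by
        have : Φ k * c - Φ f₀ * c = -(Φ k - Φ f₀) * d := by rw [hd]; ring
        nlinarith [key k]
      have h3 : (ℓ (k, 0) - ℓ (f₀, 0)) / d ≤ Φ k - Φ f₀ := by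
        rw [div_le_iff₀ hd0]
        linarith [h2]
      rw [div_sub_div_same]
      linarith [h3]
    have h1 := hsub (f₀ - h)
    have h2 : Φ (f₀ - h) ≤ Φ f₀ := by
      refine hmono _ (bcf_mem_Bb f₀) _ (bcf_mem_Bb (f₀ - h)) (fun ω => ?_)
      have := hh ω
      simp only [BoundedContinuousFunction.coe_sub, Pi.sub_apply]
      linarith
    have hlin : ℓ ((f₀ - h : Ω →ᵇ ℝ), (0:ℝ)) = ℓ (f₀, 0) - ℓ (h, 0) := by
      have : ((f₀ - h : Ω →ᵇ ℝ), (0:ℝ)) = (f₀, (0:ℝ)) - (h, (0:ℝ)) := by simp [Prod.ext_iff]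
      rw [this, map_sub]
    rw [hlin] at h1
    have : (ℓ (f₀, 0) - ℓ (h, 0)) / d - ℓ (f₀, 0) / d = -(ℓ (h, 0) / d) := by ring
    rw [this] at h1
    have := le_trans h1 h2
    have hend : 0 ≤ ℓ (h, 0) / d := by linarith
    exact hend
  · intro h
    have := key h
    have h2 : ℓ (h, 0) - ℓ (f₀, 0) ≤ (Φ h - Φ f₀) * d := by
      have hrw : Φ h * c - Φ f₀ * c = -(Φ h - Φ f₀) * d := by rw [hd]; ring
      nlinarith [key h]
    have h3 : (ℓ (h, 0) - ℓ (f₀, 0)) / d ≤ Φ h - Φ f₀ := by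
      rw [div_le_iff₀ hd0]
      linarith [h2]
    have : ℓ (h, 0) / d - ℓ (f₀, 0) / d = (ℓ (h, 0) - ℓ (f₀, 0)) / d := by ring
    rw [this]
    simp only [hΦ] at h3 ⊢
    linarith

end Subgrad

section Pull

variable {α β : Type*} [mβ : MeasurableSpace β] {j : α → β} {ν : MeasureTheory.Measure β}
  {S : Set β}

lemma image_inter_S (hrange : S ⊆ Set.range j) {A : Set α} {B : Set β}
    (h : j ⁻¹' B = A) : j '' A ∩ S = B ∩ S := by
  ext x
  constructor
  · rintro ⟨⟨a, ha, rfl⟩, hxS⟩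
    rw [← h] at ha
    exact ⟨ha, hxS⟩
  · rintro ⟨hB, hxS⟩
    obtain ⟨a, rfl⟩ := hrange hxS
    refine ⟨⟨a, ?_, rfl⟩, hxS⟩
    rw [← h]
    exact hB

variable (j ν S)

/-- Pull back the measure `ν` along `j`, relative to a carrier set `S ⊆ range j`. -/
noncomputable def pullMeas (hS : MeasurableSet S) (hrange : S ⊆ Set.range j) :
    @MeasureTheory.Measure α (MeasurableSpace.comap j mβ) := by
  letI : MeasurableSpace α := MeasurableSpace.comap j mβ
  exact MeasureTheory.Measure.ofMeasurable
    (fun A _ => ν (j '' A ∩ S))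
    (by simp)
    (by
      intro f hf hdisj
      obtain ⟨B, hB⟩ : ∃ B : ℕ → Set β, ∀ i, MeasurableSet (B i) ∧ j ⁻¹' (B i) = f i := by
        choose B h1 h2 using hf
        exact ⟨B, fun i => ⟨h1 i, h2 i⟩⟩
      have him : ∀ i, j '' (f i) ∩ S = B i ∩ S := fun i => image_inter_S hrange (hB i).2
      have hUrw : j '' (⋃ i, f i) ∩ S = ⋃ i, (B i ∩ S) := by
        rw [Set.image_iUnion, Set.iUnion_inter]
        exact Set.iUnion_congr him
      show ν (j '' (⋃ i, f i) ∩ S) = ∑' i, ν (j '' f i ∩ S)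
      rw [hUrw]
      rw [MeasureTheory.measure_iUnion ?_ (fun i => ((hB i).1).inter hS)]
      · exact tsum_congr (fun i => congrArg ν (him i).symm)
      intro i k hik
      refine Set.disjoint_left.mpr ?_
      rintro x ⟨hBi, hSx⟩ ⟨hBk, _⟩
      obtain ⟨a, rfl⟩ := hrange hSx
      have h1 : a ∈ f i := by rw [← (hB i).2]; exact hBi
      have h2 : a ∈ f k := by rw [← (hB k).2]; exact hBk
      exact Set.disjoint_left.mp (hdisj hik) h1 h2)

lemma pullMeas_apply (hS : MeasurableSet S) (hrange : S ⊆ Set.range j)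
    {B : Set β} (hB : MeasurableSet B) :
    pullMeas j ν S hS hrange (j ⁻¹' B) = ν (B ∩ S) := by
  letI : MeasurableSpace α := MeasurableSpace.comap j mβ
  have hA : MeasurableSet (j ⁻¹' B) := ⟨B, hB, rfl⟩
  rw [pullMeas, MeasureTheory.Measure.ofMeasurable_apply _ hA]
  exact congrArg ν (image_inter_S hrange rfl)

lemma measurable_j_comap : @Measurable α β (MeasurableSpace.comap j mβ) mβ j := by
  letI : MeasurableSpace α := MeasurableSpace.comap j mβ
  exact Measurable.of_comap_le (le_refl _)

lemma pullMeas_map (hS : MeasurableSet S) (hrange : S ⊆ Set.range j)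
    (hν : ν Sᶜ = 0) :
    @MeasureTheory.Measure.map α β (MeasurableSpace.comap j mβ) mβ j
      (pullMeas j ν S hS hrange) = ν := by
  letI : MeasurableSpace α := MeasurableSpace.comap j mβ
  have hj : Measurable j := Measurable.of_comap_le (le_refl _)
  ext B hB
  rw [MeasureTheory.Measure.map_apply hj hB, pullMeas_apply j ν S hS hrange hB]
  have : ν (B ∩ S) + ν (B ∩ Sᶜ) = ν B := by
    rw [← MeasureTheory.measure_inter_add_diff B hS, Set.diff_eq]
  have h0 : ν (B ∩ Sᶜ) = 0 := MeasureTheory.measure_mono_null Set.inter_subset_right hν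
  rw [h0, add_zero] at this
  exact this

end Pull

section Small

variable [T2Space Ω] (φ : (Ω → ℝ) → ℝ)
  (hmono : ∀ f ∈ Bb Ω, ∀ g ∈ Bb Ω, (∀ ω, g ω ≤ f ω) → φ g ≤ φ f)
  (hconv : ∀ f ∈ Bb Ω, ∀ g ∈ Bb Ω, ∀ a b : ℝ, 0 ≤ a → 0 ≤ b → a + b = 1 →
      φ (a • f + b • g) ≤ a * φ f + b * φ g)
  (htight : ∀ M : ℝ, 1 ≤ M → ∃ K : ℕ → Set Ω, (∀ n, IsCompact (K n)) ∧
      Tendsto (fun n => φ (fun ω => M * (K n)ᶜ.indicator (fun _ => (1 : ℝ)) ω))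
        atTop (𝓝 (φ 0)))

lemma indicator_mem_Bb {K : Set Ω} (hK : IsCompact K) (M : ℝ) :
    (fun ω => M * (K)ᶜ.indicator (fun _ => (1 : ℝ)) ω) ∈ Bb Ω := by
  constructor
  · exact (measurable_const.indicator hK.isClosed.measurableSet.compl).const_mul M
  · refine ⟨|M|, fun ω => ?_⟩
    rw [abs_mul]
    rcases Set.indicator_eq_zero_or_self Kᶜ (fun _ => (1:ℝ)) ω with h | h <;> rw [h] <;> simp

include hmono hconv htight

lemma subgrad_small (f₀ : Ω →ᵇ ℝ) (L : (Ω →ᵇ ℝ) → ℝ)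
    (hLadd : ∀ g h, L (g + h) = L g + L h)
    (hLsmul : ∀ (r : ℝ) g, L (r • g) = r * L g)
    (hLsub : ∀ h : Ω →ᵇ ℝ, φ ⇑f₀ + (L h - L f₀) ≤ φ ⇑h)
    {ε : ℝ} (hε : 0 < ε) :
    ∃ K : Set Ω, IsCompact K ∧ ∀ h : Ω →ᵇ ℝ, (∀ ω, 0 ≤ h ω) → (∀ ω, h ω ≤ 1) →
      (∀ ω ∈ K, h ω = 0) → L h ≤ ε := by
  classical
  set A : ℝ := (1/2) * φ ⇑((2:ℝ) • f₀) + (1/2) * (φ 0 + 1) - φ ⇑f₀ with hA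
  obtain ⟨n₀, hn₀⟩ := exists_nat_gt (A / ε)
  set n : ℕ := n₀ + 1 with hn
  have hn1 : (1:ℝ) ≤ n := by exact_mod_cast Nat.one_le_iff_ne_zero.mpr (by omega)
  have hnpos : (0:ℝ) < n := by linarith
  have hAn : A < n * ε := by
    have : A / ε < n := lt_of_lt_of_le hn₀ (by exact_mod_cast Nat.le_succ n₀)
    calc A = (A / ε) * ε := by field_simp
      _ < n * ε := by exact mul_lt_mul_of_pos_right this hε
  set M : ℝ := 2 * n with hM
  obtain ⟨K, hKcomp, hKtend⟩ := htight M (by rw [hM]; linarith)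
  have htend2 : ∀ᶠ m in atTop,
      φ (fun ω => M * (K m)ᶜ.indicator (fun _ => (1 : ℝ)) ω) < φ 0 + 1 := by
    have := hKtend (IsOpen.mem_nhds isOpen_Iio (by simp : φ 0 ∈ Set.Iio (φ 0 + 1)))
    exact this
  obtain ⟨m, hm⟩ := htend2.exists
  refine ⟨K m, hKcomp m, fun h hh0 hh1 hhK => ?_⟩
  -- main chain
  have hstep1 : (n:ℝ) * L h = L ((n:ℝ) • h) := (hLsmul n h).symm
  have hstep2 : L ((n:ℝ) • h) ≤ φ ⇑(f₀ + (n:ℝ) • h) - φ ⇑f₀ := by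
    have := hLsub (f₀ + (n:ℝ) • h)
    have hadd2 : L (f₀ + (n:ℝ) • h) = L f₀ + L ((n:ℝ) • h) := hLadd f₀ ((n:ℝ) • h)
    linarith
  set ind : Ω → ℝ := fun ω => (K m)ᶜ.indicator (fun _ => (1:ℝ)) ω with hind
  have hind0 : ∀ ω, 0 ≤ ind ω := fun ω => by
    rcases Set.indicator_eq_zero_or_self (K m)ᶜ (fun _ => (1:ℝ)) ω with h' | h' <;>
      rw [hind] <;> simp only [h'] <;> norm_num
  have hstep3 : φ ⇑(f₀ + (n:ℝ) • h) ≤ φ (fun ω => f₀ ω + (n:ℝ) * ind ω) := by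
    refine hmono _ ?_ _ (bcf_mem_Bb _) (fun ω => ?_)
    · obtain ⟨hm1, Mb, hMb⟩ := indicator_mem_Bb (hKcomp m) (1:ℝ)
      constructor
      · refine Measurable.add f₀.continuous.measurable ?_
        simp only [one_mul] at hm1
        exact (Measurable.const_mul (by simpa [hind] using hm1) (n:ℝ))
      · refine ⟨‖f₀‖ + n, fun ω => ?_⟩
        have h1 := abs_le.mp (by simpa [Real.norm_eq_abs] using f₀.norm_coe_le_norm ω)
        have h2 : ind ω ≤ 1 := by
          rcases Set.indicator_eq_zero_or_self (K m)ᶜ (fun _ => (1:ℝ)) ω with h' | h' <;>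
            rw [hind] <;> simp only [h'] <;> norm_num
        have h3 := hind0 ω
        show |f₀ ω + (n:ℝ) * ind ω| ≤ ‖f₀‖ + n
        rw [abs_le]
        constructor
        · nlinarith [mul_nonneg hnpos.le h3, h1.1]
        · nlinarith [mul_le_mul_of_nonneg_left h2 hnpos.le, h1.2]
    · simp only [BoundedContinuousFunction.coe_add, BoundedContinuousFunction.coe_smul,
        Pi.add_apply, Pi.smul_apply, smul_eq_mul]
      by_cases hω : ω ∈ K m
      · have : h ω = 0 := hhK ω hω
        rw [this]
        have := hind0 ω
        nlinarith
      · have : ind ω = 1 := by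
          rw [hind]
          simp [Set.indicator_of_mem, hω]
        rw [this]
        have := hh1 ω
        nlinarith
  have hstep4 : φ (fun ω => f₀ ω + (n:ℝ) * ind ω)
      ≤ (1/2) * φ ⇑((2:ℝ) • f₀) + (1/2) * φ (fun ω => M * ind ω) := by
    have hcv := hconv _ (bcf_mem_Bb ((2:ℝ) • f₀)) (fun ω => M * ind ω) ?_ (1/2) (1/2)
      (by norm_num) (by norm_num) (by norm_num)
    · have heq : ((1/2 : ℝ) • ⇑((2:ℝ) • f₀) + (1/2 : ℝ) • (fun ω => M * ind ω))
          = fun ω => f₀ ω + (n:ℝ) * ind ω := by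
        funext ω
        simp only [Pi.add_apply, Pi.smul_apply, BoundedContinuousFunction.coe_smul,
          smul_eq_mul, hM]
        ring
      rw [heq] at hcv
      exact hcv
    · obtain ⟨hmeas, Mb, hMb⟩ := indicator_mem_Bb (hKcomp m) M
      exact ⟨by simpa [hind] using hmeas, Mb, by simpa [hind] using hMb⟩
  have hstep5 : φ (fun ω => M * ind ω) ≤ φ 0 + 1 := le_of_lt (by simpa [hind] using hm)
  have : (n:ℝ) * L h ≤ A := by
    rw [hstep1, hA]
    calc L ((n:ℝ) • h) ≤ φ ⇑(f₀ + (n:ℝ) • h) - φ ⇑f₀ := hstep2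
      _ ≤ φ (fun ω => f₀ ω + (n:ℝ) * ind ω) - φ ⇑f₀ := by linarith
      _ ≤ (1/2) * φ ⇑((2:ℝ) • f₀) + (1/2) * φ (fun ω => M * ind ω) - φ ⇑f₀ := by linarith
      _ ≤ (1/2) * φ ⇑((2:ℝ) • f₀) + (1/2) * (φ 0 + 1) - φ ⇑f₀ := by linarith
  have hLh : (n:ℝ) * L h < n * ε := lt_of_le_of_lt this hAn
  have := (mul_lt_mul_iff_right₀ hnpos).mp hLh
  linarith

end Small

section Cube

variable (Ω : Type*) [TopologicalSpace Ω]

/-- The compact cube into which `Ω` maps. -/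
def Tcube : Type _ := Π g : Ω →ᵇ ℝ, (Set.Icc (-‖g‖) ‖g‖ : Set ℝ)

instance : TopologicalSpace (Tcube Ω) := by unfold Tcube; infer_instance
instance : CompactSpace (Tcube Ω) := by unfold Tcube; infer_instance
instance : T2Space (Tcube Ω) := by unfold Tcube; infer_instance

noncomputable instance : MeasurableSpace (Tcube Ω) := borel _
instance : BorelSpace (Tcube Ω) := ⟨rfl⟩

/-- the evaluation embedding -/
def jmap : Ω → Tcube Ω := fun ω g =>
  ⟨g ω, by
    rw [Set.mem_Icc]
    have := abs_le.mp (by simpa [Real.norm_eq_abs] using g.norm_coe_le_norm ω)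
    exact this⟩

lemma jmap_continuous : Continuous (jmap Ω) := by
  apply continuous_pi
  intro g
  exact Continuous.subtype_mk g.continuous _

/-- coordinate projection as a continuous map on the cube -/
def projCM (g : Ω →ᵇ ℝ) : C(Tcube Ω, ℝ) :=
  ⟨fun x => (x g : ℝ), by
    have : Continuous fun x : Tcube Ω => x g := continuous_apply g
    exact continuous_subtype_val.comp this⟩

lemma projCM_jmap (g : Ω →ᵇ ℝ) (ω : Ω) : projCM Ω g (jmap Ω ω) = g ω := rfl

/-- composition of a continuous function on the cube with the embedding -/
noncomputable def compBCF (F : C(Tcube Ω, ℝ)) : Ω →ᵇ ℝ :=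
  BoundedContinuousFunction.ofNormedAddCommGroup (fun ω => F (jmap Ω ω))
    (F.continuous.comp (jmap_continuous Ω)) ‖F‖ (fun ω => F.norm_coe_le_norm _)

lemma compBCF_apply (F : C(Tcube Ω, ℝ)) (ω : Ω) : compBCF Ω F ω = F (jmap Ω ω) := rfl

lemma compBCF_add (F G : C(Tcube Ω, ℝ)) :
    compBCF Ω (F + G) = compBCF Ω F + compBCF Ω G := by
  ext ω; simp [compBCF_apply]

lemma compBCF_smul (r : ℝ) (F : C(Tcube Ω, ℝ)) :
    compBCF Ω (r • F) = r • compBCF Ω F := by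
  ext ω; simp [compBCF_apply]

lemma compBCF_proj (g : Ω →ᵇ ℝ) : compBCF Ω (projCM Ω g) = g := by
  ext ω; rfl

end Cube









section MainAux

variable [T2Space Ω] (φ : (Ω → ℝ) → ℝ)
  (hmono : ∀ f ∈ Bb Ω, ∀ g ∈ Bb Ω, (∀ ω, g ω ≤ f ω) → φ g ≤ φ f)
  (hconv : ∀ f ∈ Bb Ω, ∀ g ∈ Bb Ω, ∀ a b : ℝ, 0 ≤ a → 0 ≤ b → a + b = 1 →
      φ (a • f + b • g) ≤ a * φ f + b * φ g)
  (htight : ∀ M : ℝ, 1 ≤ M → ∃ K : ℕ → Set Ω, (∀ n, IsCompact (K n)) ∧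
      Tendsto (fun n => φ (fun ω => M * (K n)ᶜ.indicator (fun _ => (1 : ℝ)) ω))
        atTop (𝓝 (φ 0)))

/-- bundling an element of `Cb` -/
noncomputable def mkB (g : Ω → ℝ) (hg : g ∈ Cb Ω) : Ω →ᵇ ℝ :=
  BoundedContinuousFunction.ofNormedAddCommGroup g hg.1 hg.2.choose
    (fun ω => by simpa [Real.norm_eq_abs] using hg.2.choose_spec ω)

lemma mkB_coe (g : Ω → ℝ) (hg : g ∈ Cb Ω) : ⇑(mkB g hg) = g := rfl

include hmono hconv htight in
/-- The key representation: there is a finite measure on `σ(C_b)` representing a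
subgradient of `φ` at `f`. -/
theorem exists_rep (f : Ω → ℝ) (hf : f ∈ Cb Ω) :
    ∃ μ : @Measure Ω (sigmaGen (Cb Ω)), (μ ∈ caPosCb Ω) ∧
      (∀ g ∈ Cb Ω, (∫ ω, g ω ∂μ) - φ g ≤ (∫ ω, f ω ∂μ) - φ f) := by
  classical
  set fb : Ω →ᵇ ℝ := mkB f hf with hfb
  obtain ⟨L, hLadd, hLsmul, hLpos, hLsub⟩ := exists_subgradient φ hmono hconv fb
  -- the tight exhaustion
  have hsmall : ∀ m : ℕ, ∃ K : Set Ω, IsCompact K ∧ ∀ h : Ω →ᵇ ℝ,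
      (∀ ω, 0 ≤ h ω) → (∀ ω, h ω ≤ 1) → (∀ ω ∈ K, h ω = 0) → L h ≤ 1 / (m + 1) :=
    fun m => subgrad_small φ hmono hconv htight fb L hLadd hLsmul hLsub
      (by positivity)
  choose K hKc hKs using hsmall
  -- the functional on the cube
  set T := Tcube Ω with hT
  set j : Ω → T := jmap Ω with hj
  set Λ : C(T, ℝ) → ℝ := fun F => L (compBCF Ω F) with hΛ
  have hΛadd : ∀ F G, Λ (F + G) = Λ F + Λ G := by
    intro F G
    show L (compBCF Ω (F + G)) = L (compBCF Ω F) + L (compBCF Ω G)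
    rw [compBCF_add]; exact hLadd _ _
  have hΛpos : ∀ F : C(T, ℝ), (∀ x, 0 ≤ F x) → 0 ≤ Λ F := by
    intro F hF; exact hLpos _ (fun ω => hF _)
  have hΛsmul : ∀ (r : ℝ) (F : C(T, ℝ)), Λ (r • F) = r * Λ F := by
    intro r F
    show L (compBCF Ω (r • F)) = r * L (compBCF Ω F)
    rw [compBCF_smul]; exact hLsmul _ _
  set ν := rieszMeas Λ hΛadd hΛpos with hν
  set S : Set T := ⋃ m, j '' K m with hS
  have hSmeas : MeasurableSet S :=
    MeasurableSet.iUnion (fun m =>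
      (((hKc m).image (jmap_continuous Ω)).isClosed).measurableSet)
  have hSrange : S ⊆ Set.range j := by
    rw [hS]
    refine Set.iUnion_subset (fun m => ?_)
    rintro x ⟨ω, _, rfl⟩
    exact ⟨ω, rfl⟩
  have hνS : ν Sᶜ = 0 := by
    have hb : ∀ m : ℕ, ν Sᶜ ≤ ENNReal.ofReal (1 / (m + 1)) := by
      intro m
      have hsub : Sᶜ ⊆ (j '' K m)ᶜ := by
        apply Set.compl_subset_compl.mpr
        exact Set.subset_iUnion (fun m => j '' K m) m
      refine le_trans (measure_mono hsub) ?_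
      have hclosed : IsClosed (j '' K m) :=
        ((hKc m).image (jmap_continuous Ω)).isClosed
      refine rieszMeas_open_le Λ hΛadd hΛpos hclosed.isOpen_compl (fun C hC hCU => ?_)
      obtain ⟨u, hu0, hu1, hu01⟩ := exists_continuous_zero_one_of_isClosed
        hclosed hC.isClosed (by
          rw [Set.disjoint_right]
          intro x hx
          exact fun hmem => (hCU hx) hmem)
      have humem : u ∈ testSet C := ⟨fun x => (hu01 x).1, fun x hx => (hu1 hx).ge⟩
      refine le_trans (lam0_le Λ hΛadd hΛpos humem) ?_
      refine hKs m (compBCF Ω u) (fun ω => (hu01 _).1) (fun ω => (hu01 _).2) ?_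
      intro ω hω
      exact hu0 (Set.mem_image_of_mem j hω)
    have htend : Tendsto (fun m : ℕ => ENNReal.ofReal (1 / (m + 1))) atTop (𝓝 0) := by
      rw [show (0 : ℝ≥0∞) = ENNReal.ofReal 0 by simp]
      apply ENNReal.tendsto_ofReal
      exact tendsto_one_div_add_atTop_nhds_zero_nat
    exact le_antisymm (ge_of_tendsto' htend hb) zero_le
  -- pull the measure back
  set μ' := pullMeas j ν S hSmeas hSrange with hμ'
  have hle : sigmaGen (Cb Ω) ≤ MeasurableSpace.comap j inferInstance := by
    refine iSup₂_le (fun g hg => ?_)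
    have hfac : g = (projCM Ω (mkB g hg)) ∘ j := by
      funext ω; rfl
    rw [hfac, ← MeasurableSpace.comap_comp]
    exact MeasurableSpace.comap_mono
      ((projCM Ω (mkB g hg)).continuous.measurable.comap_le)
  set μ : @Measure Ω (sigmaGen (Cb Ω)) := μ'.trim hle with hμ
  -- integral identity
  have hint' : ∀ g : Ω →ᵇ ℝ, ∫ ω, g ω ∂μ' = L g := by
    intro g
    have hjm : @Measurable Ω T (MeasurableSpace.comap j inferInstance) _ j :=
      measurable_j_comap j
    have h1 : ∫ ω, g ω ∂μ' = ∫ ω, (projCM Ω g) (j ω) ∂μ' := by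
      congr 1
    have h2 : ∫ ω, (projCM Ω g) (j ω) ∂μ'
        = ∫ y, projCM Ω g y ∂(@MeasureTheory.Measure.map Ω T
            (MeasurableSpace.comap j inferInstance) _ j μ') := by
      rw [MeasureTheory.integral_map hjm.aemeasurable
        (projCM Ω g).continuous.aestronglyMeasurable]
    have h3 : (@MeasureTheory.Measure.map Ω T
        (MeasurableSpace.comap j inferInstance) _ j μ') = ν :=
      pullMeas_map j ν S hSmeas hSrange hνS
    rw [h1, h2, h3, integral_eq_lam Λ hΛadd hΛpos hΛsmul (projCM Ω g)]
    rw [hΛ]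
    simp only [compBCF_proj]
  have hμuniv : μ Set.univ < ⊤ := by
    rw [hμ, MeasureTheory.trim_measurableSet_eq hle MeasurableSet.univ]
    have : (Set.univ : Set Ω) = j ⁻¹' Set.univ := by simp
    rw [hμ', this, pullMeas_apply j ν S hSmeas hSrange MeasurableSet.univ]
    exact lt_of_le_of_lt (measure_mono (Set.subset_univ _)) (measure_lt_top ν _)
  have hintμ : ∀ (g : Ω → ℝ) (hg : g ∈ Cb Ω), ∫ ω, g ω ∂μ = L (mkB g hg) := by
    intro g hg
    have hsm : @StronglyMeasurable Ω ℝ _ (sigmaGen (Cb Ω)) g := by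
      have hcle : MeasurableSpace.comap g inferInstance ≤ sigmaGen (Cb Ω) := by
        exact le_iSup₂ (f := fun (f : Ω → ℝ) (_ : f ∈ Cb Ω) =>
          MeasurableSpace.comap f inferInstance) g hg
      exact (Measurable.of_comap_le hcle).stronglyMeasurable
    rw [hμ, ← MeasureTheory.integral_trim hle hsm]
    have := hint' (mkB g hg)
    rw [mkB_coe] at this
    exact this
  refine ⟨μ, ?_, ?_⟩
  · intro g hg hg0
    obtain ⟨Mg, hMg⟩ := hg.2
    calc ∫⁻ ω, ENNReal.ofReal (g ω) ∂μ
        ≤ ∫⁻ _, ENNReal.ofReal Mg ∂μ := by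
          refine MeasureTheory.lintegral_mono (fun ω => ENNReal.ofReal_le_ofReal ?_)
          have := abs_le.mp (hMg ω)
          linarith [this.2]
      _ = ENNReal.ofReal Mg * μ Set.univ := by
          rw [MeasureTheory.lintegral_const]
      _ < ⊤ := ENNReal.mul_lt_top ENNReal.ofReal_lt_top hμuniv
  · intro g hg
    rw [hintμ g hg, hintμ f hf]
    have h3 := hLsub (mkB g hg)
    rw [mkB_coe] at h3
    have h4 : φ f + (L (mkB g hg) - L (mkB f hf)) ≤ φ g := h3
    linarith

end MainAux

/-- Example 1.8.1, representation under the tightness condition (11): a real-valued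
increasing convex functional φ on B_b such that for every M ≥ 1 there are compacts K_n
with φ(M 1_{K_n^c}) → φ(0), restricted to C_b, admits a max-representation over ca⁺(C_b). -/
theorem stmt18 [T2Space Ω] (φ : (Ω → ℝ) → ℝ)
    (hmono : ∀ f ∈ Bb Ω, ∀ g ∈ Bb Ω, (∀ ω, g ω ≤ f ω) → φ g ≤ φ f)
    (hconv : ∀ f ∈ Bb Ω, ∀ g ∈ Bb Ω, ∀ a b : ℝ, 0 ≤ a → 0 ≤ b → a + b = 1 →
      φ (a • f + b • g) ≤ a * φ f + b * φ g)
    (htight : ∀ M : ℝ, 1 ≤ M → ∃ K : ℕ → Set Ω, (∀ n, IsCompact (K n)) ∧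
      Tendsto (fun n => φ (fun ω => M * (K n)ᶜ.indicator (fun _ => (1 : ℝ)) ω))
        atTop (𝓝 (φ 0))) :
    ∀ f ∈ Cb Ω,
      (∃ μ ∈ caPosCb Ω,
        ((φ f : ℝ) : EReal) = ((∫ ω, f ω ∂μ : ℝ) : EReal) - conjCb φ μ) ∧
      (∀ μ ∈ caPosCb Ω,
        ((∫ ω, f ω ∂μ : ℝ) : EReal) - conjCb φ μ ≤ ((φ f : ℝ) : EReal)) := by
  intro f hf
  constructor
  · obtain ⟨μ, hμca, hsub⟩ := exists_rep φ hmono hconv htight f hf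
    have hconj : conjCb φ μ = (((∫ ω, f ω ∂μ) - φ f : ℝ) : EReal) := by
      apply le_antisymm
      · refine iSup₂_le (fun g hg => ?_)
        rw [← EReal.coe_sub]
        exact EReal.coe_le_coe_iff.mpr (hsub g hg)
      · have h := le_iSup₂ (f := fun (g : Ω → ℝ) (_ : g ∈ Cb Ω) =>
          ((∫ ω, g ω ∂μ : ℝ) : EReal) - ((φ g : ℝ) : EReal)) f hf
        rw [EReal.coe_sub]
        exact h
    refine ⟨μ, hμca, ?_⟩
    rw [hconj, ← EReal.coe_sub]
    exact congrArg _ (by ring)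
  · intro μ hμca
    have hterm : (((∫ ω, f ω ∂μ) - φ f : ℝ) : EReal) ≤ conjCb φ μ := by
      rw [EReal.coe_sub]
      exact le_iSup₂ (f := fun (g : Ω → ℝ) (_ : g ∈ Cb Ω) =>
        ((∫ ω, g ω ∂μ : ℝ) : EReal) - ((φ g : ℝ) : EReal)) f hf
    calc ((∫ ω, f ω ∂μ : ℝ) : EReal) - conjCb φ μ
        ≤ ((∫ ω, f ω ∂μ : ℝ) : EReal) - (((∫ ω, f ω ∂μ) - φ f : ℝ) : EReal) :=
          EReal.sub_le_sub le_rfl hterm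
      _ = ((φ f : ℝ) : EReal) := by
          rw [← EReal.coe_sub]
          exact congrArg _ (by ring)
end
end

section
/- Let s : ℓ^∞ → ℝ be the functional s(f) := sup_m f(m) on the space ℓ^∞ of bounded functions f : ℕ → ℝ. Then s is increasing and convex, s(f) = sup_{μ ∈ ca⁺₁(ℕ)} ⟨f,μ⟩ for all f ∈ ℓ^∞, but if f ∈ ℓ^∞ does not attain its supremum, then there is no countably additive measure μ ∈ ca⁺(ℕ) with s(f) = ⟨f,μ⟩ − s*_{ℓ^∞}(μ); in particular s does not admit a max-representation over ca⁺(ℕ). -/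
open MeasureTheory Filter Topology Set

/-- ℓ^∞: the set of bounded functions f : ℕ → ℝ. -/
def Binf : Set (ℕ → ℝ) := {f | ∃ M : ℝ, ∀ n, |f n| ≤ M}

/-- The functional s(f) = sup_m f(m). -/
noncomputable def supF (f : ℕ → ℝ) : ℝ := sSup (Set.range f)

/-- The convex conjugate s*_{ℓ^∞} of s at a measure μ on ℕ. -/
noncomputable def supFConj (μ : Measure ℕ) : EReal :=
  ⨆ f ∈ Binf, ((∫ m, f m ∂μ : ℝ) : EReal) - ((supF f : ℝ) : EReal)

lemma binf_bdd {f : ℕ → ℝ} (hf : f ∈ Binf) : BddAbove (Set.range f) := by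
  obtain ⟨M, hM⟩ := hf
  exact ⟨M, by rintro _ ⟨n, rfl⟩; exact (abs_le.1 (hM n)).2⟩

lemma le_supF {f : ℕ → ℝ} (hf : f ∈ Binf) (m : ℕ) : f m ≤ supF f :=
  le_csSup (binf_bdd hf) ⟨m, rfl⟩

lemma const_mem_binf (c : ℝ) : (fun _ : ℕ => c) ∈ Binf := ⟨|c|, fun _ => le_rfl⟩

lemma supF_const (c : ℝ) : supF (fun _ : ℕ => c) = c := by
  simp [supF, Set.range_const]

lemma integrable_binf {f : ℕ → ℝ} (hf : f ∈ Binf) (μ : Measure ℕ) [IsFiniteMeasure μ] :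
    Integrable f μ := by
  obtain ⟨M, hM⟩ := hf
  refine ⟨(measurable_from_top).aestronglyMeasurable, HasFiniteIntegral.of_bounded (C := M) ?_⟩
  exact ae_of_all _ fun n => by simpa using hM n

lemma integral_le_supF {f : ℕ → ℝ} (hf : f ∈ Binf) (μ : Measure ℕ) [IsProbabilityMeasure μ] :
    ∫ m, f m ∂μ ≤ supF f := by
  calc ∫ m, f m ∂μ ≤ ∫ _, supF f ∂μ :=
        integral_mono (integrable_binf hf μ) (integrable_const _) (le_supF hf)
    _ = supF f := by simp

lemma term_le_supFConj {g : ℕ → ℝ} (hg : g ∈ Binf) (μ : Measure ℕ) :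
    ((∫ m, g m ∂μ : ℝ) : EReal) - ((supF g : ℝ) : EReal) ≤ supFConj μ :=
  le_iSup₂ (f := fun g (_ : g ∈ Binf) => ((∫ m, g m ∂μ : ℝ) : EReal) - ((supF g : ℝ) : EReal))
    g hg

lemma supFConj_nonneg (μ : Measure ℕ) : (0 : EReal) ≤ supFConj μ := by
  have h := term_le_supFConj (const_mem_binf 0) μ
  simpa [supF_const] using h

lemma supFConj_prob (μ : Measure ℕ) [IsProbabilityMeasure μ] : supFConj μ = 0 := by
  refine le_antisymm ?_ (supFConj_nonneg μ)
  refine iSup₂_le fun g hg => ?_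
  rw [← EReal.coe_sub]
  exact_mod_cast sub_nonpos.2 (integral_le_supF hg μ)

lemma supFConj_top (μ : Measure ℕ) [IsFiniteMeasure μ] (h : μ Set.univ ≠ 1) :
    supFConj μ = ⊤ := by
  by_contra hne
  have hbot : supFConj μ ≠ ⊥ := fun hb => by
    simpa [hb] using supFConj_nonneg μ
  set t : ℝ := (μ Set.univ).toReal with ht
  have ht1 : t ≠ 1 := fun h1 => h ((ENNReal.toReal_eq_one_iff _).1 h1)
  set r : ℝ := (supFConj μ).toReal with hr
  have hco : supFConj μ = (r : EReal) := (EReal.coe_toReal hne hbot).symm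
  set c : ℝ := (r + 1) / (t - 1) with hc
  have hterm := term_le_supFConj (const_mem_binf c) μ
  have hint : ∫ _ : ℕ, c ∂μ = t * c := by simp [ht, smul_eq_mul, mul_comm, measureReal_def]
  rw [hint, supF_const, ← EReal.coe_sub, hco, EReal.coe_le_coe_iff] at hterm
  have hne1 : t - 1 ≠ 0 := sub_ne_zero.2 ht1
  have hcc : t * c - c = r + 1 := by
    have h2 : t * c - c = (t - 1) * c := by ring
    rw [h2, hc, mul_div_cancel₀ _ hne1]
  rw [hcc] at hterm
  linarith

/-- Example 1.2.1: s(f) = sup_m f(m) is increasing and convex on ℓ^∞, it has the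
sup-representation s(f) = sup_{μ ∈ ca⁺₁(ℕ)} ⟨f,μ⟩ over countably additive probability
measures, but if f does not attain its supremum then s(f) is not of the form
⟨f,μ⟩ − s*_{ℓ^∞}(μ) for any countably additive finite measure μ; so s admits no
max-representation over ca⁺(ℕ). -/
theorem stmt19 :
    (∀ f ∈ Binf, ∀ g ∈ Binf, (∀ n, g n ≤ f n) → supF g ≤ supF f) ∧
    (∀ f ∈ Binf, ∀ g ∈ Binf, ∀ a b : ℝ, 0 ≤ a → 0 ≤ b → a + b = 1 →
      supF (a • f + b • g) ≤ a * supF f + b * supF g) ∧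
    (∀ f ∈ Binf, ((supF f : ℝ) : EReal) =
      ⨆ μ ∈ {μ : Measure ℕ | IsProbabilityMeasure μ}, ((∫ m, f m ∂μ : ℝ) : EReal)) ∧
    (∀ f ∈ Binf, (¬ ∃ m : ℕ, f m = supF f) →
      ¬ ∃ μ : Measure ℕ, IsFiniteMeasure μ ∧
        ((supF f : ℝ) : EReal) = ((∫ m, f m ∂μ : ℝ) : EReal) - supFConj μ) := by
  refine ⟨?_, ?_, ?_, ?_⟩
  · intro f hf g _ hle
    refine csSup_le (Set.range_nonempty _) ?_
    rintro _ ⟨n, rfl⟩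
    exact (hle n).trans (le_supF hf n)
  · intro f hf g hg a b ha hb _
    refine csSup_le (Set.range_nonempty _) ?_
    rintro _ ⟨n, rfl⟩
    simp only [Pi.add_apply, Pi.smul_apply, smul_eq_mul]
    exact add_le_add (mul_le_mul_of_nonneg_left (le_supF hf n) ha)
      (mul_le_mul_of_nonneg_left (le_supF hg n) hb)
  · intro f hf
    set T : EReal := ⨆ μ ∈ {μ : Measure ℕ | IsProbabilityMeasure μ},
      ((∫ m, f m ∂μ : ℝ) : EReal) with hT
    have hdir : ∀ m : ℕ, ((f m : ℝ) : EReal) ≤ T := by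
      intro m
      have hmem : (Measure.dirac m : Measure ℕ) ∈ {μ : Measure ℕ | IsProbabilityMeasure μ} :=
        Measure.dirac.isProbabilityMeasure
      have := le_iSup₂ (f := fun (μ : Measure ℕ) (_ : μ ∈ {μ : Measure ℕ | IsProbabilityMeasure μ})
        => ((∫ m, f m ∂μ : ℝ) : EReal)) (Measure.dirac m) hmem
      simp [integral_dirac] at this
      exact this
    have hle : T ≤ ((supF f : ℝ) : EReal) := by
      refine iSup₂_le fun μ hμ => ?_
      haveI : IsProbabilityMeasure μ := hμ
      exact_mod_cast integral_le_supF hf μ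
    refine le_antisymm ?_ hle
    have hTbot : T ≠ ⊥ := fun hb => by
      have := hdir 0
      simp [hb] at this
    have hTtop : T ≠ ⊤ := fun h0 => by
      rw [h0] at hle
      exact (EReal.coe_ne_top _) (top_le_iff.1 hle)
    rw [← EReal.coe_toReal hTtop hTbot]
    rw [EReal.coe_le_coe_iff]
    refine csSup_le (Set.range_nonempty _) ?_
    rintro _ ⟨m, rfl⟩
    have := hdir m
    rw [← EReal.coe_toReal hTtop hTbot, EReal.coe_le_coe_iff] at this
    exact this
  · rintro f hf hno ⟨μ, hfin, heq⟩
    by_cases h1 : μ Set.univ = 1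
    · haveI : IsProbabilityMeasure μ := ⟨h1⟩
      rw [supFConj_prob μ, sub_zero, EReal.coe_eq_coe_iff] at heq
      set g : ℕ → ℝ := fun m => supF f - f m with hg
      have hgint : Integrable g μ := (integrable_const _).sub (integrable_binf hf μ)
      have hgnn : 0 ≤ g := fun m => sub_nonneg.2 (le_supF hf m)
      have hgzero : ∫ m, g m ∂μ = 0 := by
        rw [hg]
        rw [integral_sub (integrable_const _) (integrable_binf hf μ)]
        simp [← heq]
      have hae : g =ᵐ[μ] 0 := (integral_eq_zero_iff_of_nonneg hgnn hgint).1 hgzero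
      have : μ {m | ¬ g m = 0} = 0 := by
        have := hae
        rw [Filter.EventuallyEq, ae_iff] at this
        simpa using this
      have huniv : {m : ℕ | ¬ g m = 0} = Set.univ := by
        ext m
        simp only [Set.mem_setOf_eq, Set.mem_univ, iff_true]
        exact sub_ne_zero.2 fun hc => hno ⟨m, hc.symm⟩
      rw [huniv, h1] at this
      exact one_ne_zero this
    · rw [supFConj_top μ h1] at heq
      have : ((∫ m, f m ∂μ : ℝ) : EReal) - ⊤ = ⊥ := by
        rw [sub_eq_add_neg]
        simp
      rw [this] at heq
      exact (EReal.coe_ne_bot _) heq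
end
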